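/- arXiv:2410.17575 — 2 statements merged into one kernel-verified Lean document; each statement's English description precedes it below -/
import Mathlib

section
/- Let φ ∈ S̃ and let σ₁ > σ_φ. Then for almost every ω ∈ Ω (with respect to the Haar measure m), there exists a constant C(σ₁, ω) > 0 such that |φ(s, ω)| ≤ C(σ₁, ω)(|t| + 2) for all s = σ + it with σ ≥ σ₁. -/
open Complex MeasureTheory Filter Topology

noncomputable section

/-- The open vertical strip `a < Re s < b`. -/
def Strip (a b : ℝ) : Set ℂ := {s : ℂ | a < s.re ∧ s.re < b}

/-- The space `H(D)` of holomorphic functions on `D`, realized as continuous maps on the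
subspace `D` (with the compact-open topology, i.e. the topology of locally uniform
convergence) which are restrictions of functions holomorphic on `D`. -/
def Hol (D : Set ℂ) : Type :=
  {f : C(D, ℂ) // ∃ F : ℂ → ℂ, DifferentiableOn ℂ F D ∧ ∀ z : D, f z = F z}

instance (D : Set ℂ) : TopologicalSpace (Hol D) :=
  instTopologicalSpaceSubtype

instance (D : Set ℂ) : Inhabited (Hol D) :=
  ⟨⟨⟨fun _ => 0, continuous_const⟩, fun _ => 0, differentiableOn_const 0, fun _ => rfl⟩⟩

instance (D : Set ℂ) : MeasurableSpace (Hol D) := borel _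

instance (D : Set ℂ) : BorelSpace (Hol D) := ⟨rfl⟩

open scoped Classical in
/-- Package a function `ℂ → ℂ` as an element of `H(D)`, provided it is holomorphic
(and continuous) on `D`; junk value otherwise. -/
def toHol (D : Set ℂ) (f : ℂ → ℂ) : Hol D :=
  if h : DifferentiableOn ℂ f D ∧ ContinuousOn f D then
    ⟨⟨D.restrict f, h.2.restrict⟩, f, h.1, fun _ => rfl⟩
  else default

instance : MeasurableSpace Circle := borel _
instance : BorelSpace Circle := ⟨rfl⟩

/-- `Ω = ∏_p 𝕋_p`, the product over all primes of copies of the unit circle `𝕋`. -/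
abbrev ProdCircle : Type := Nat.Primes → Circle

/-- The probability Haar measure `m` on `Ω = ∏_p 𝕋_p`. -/
def haarOmega : Measure ProdCircle := Measure.haar

/-- The probability Haar measure on the unit circle `𝕋`. -/
def haarCircle : Measure Circle := Measure.haar

/-- The support of a measure: the set of points all of whose open neighbourhoods have
positive measure. -/
def msupport {α : Type*} [TopologicalSpace α] [MeasurableSpace α] (μ : Measure α) : Set α :=
  {x | ∀ U : Set α, IsOpen U → x ∈ U → 0 < μ U}

/-- Distance from a real number to the nearest integer, `‖x‖`. -/
def nint (x : ℝ) : ℝ := |x - round x|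

/-- The `i`-th prime number, as an element of `Nat.Primes`. -/
def nthPrime (i : ℕ) : Nat.Primes := ⟨Nat.nth Nat.Prime i, Nat.prime_nth_prime i⟩

/-- The class `S̃` of Dirichlet series `φ(s) = ∑ a_φ(n) n^{-s}` satisfying
(S1) the Ramanujan hypothesis, (S2) meromorphic continuation to a half-plane
`Re s > σ₁(φ)` with `σ₁(φ) < 1`, holomorphic except for at most a pole at `s = 1`,
(S3) finite order (polynomial growth in vertical strips), and
(S4) a polynomial Euler product. The field `toFun` is the (meromorphically continued)
function itself. -/
structure SClassTilde where
  /-- the Dirichlet coefficients `a_φ(n)` -/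
  a : ℕ → ℂ
  /-- the (analytically continued) function `φ` -/
  toFun : ℂ → ℂ
  /-- the degree `m_φ` of the polynomial Euler product -/
  m : ℕ
  m_pos : 0 < m
  /-- the local roots `α_{j,φ}(p)` of the Euler product -/
  α : Fin m → Nat.Primes → ℂ
  /-- the abscissa `σ₁(φ) < 1` of the meromorphic continuation -/
  σ₁ : ℝ
  σ₁_lt_one : σ₁ < 1
  /-- (S1) Ramanujan hypothesis: `a_φ(n) ≪_ε n^ε` -/
  hS1 : ∀ ε : ℝ, 0 < ε → ∃ C : ℝ, 0 < C ∧ ∀ n : ℕ, 1 ≤ n → ‖a n‖ ≤ C * (n : ℝ) ^ ε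
  /-- the Dirichlet series converges for `Re s > 1` … -/
  hsum : ∀ s : ℂ, 1 < s.re → LSeriesSummable a s
  /-- … and represents `φ` there -/
  hser : ∀ s : ℂ, 1 < s.re → toFun s = LSeries a s
  /-- (S2) analytic continuation: `φ` is holomorphic on `Re s > σ₁` except possibly at `s = 1` … -/
  hS2 : DifferentiableOn ℂ toFun ({s : ℂ | σ₁ < s.re} \ {1})
  /-- … where it has at most a pole -/
  hS2' : ∃ (k : ℕ) (c : ℂ),
    Filter.Tendsto (fun s : ℂ => (s - 1) ^ k * toFun s) (nhdsWithin 1 {(1 : ℂ)}ᶜ) (nhds c)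
  /-- (S3) finite order: polynomial growth in vertical strips -/
  hS3 : ∀ σa σb : ℝ, σ₁ < σa → σa < σb → ∃ C : ℝ, 0 < C ∧ ∃ T₀ : ℝ, 0 < T₀ ∧
    ∀ s : ℂ, σa ≤ s.re → s.re ≤ σb → T₀ ≤ |s.im| → ‖toFun s‖ ≤ C * |s.im| ^ C
  /-- (S4) polynomial Euler product -/
  hS4 : ∀ s : ℂ, 1 < s.re →
    HasProd (fun p : Nat.Primes => ∏ j : Fin m, (1 - α j p * ((p : ℕ) : ℂ) ^ (-s))⁻¹) (toFun s)

namespace SClassTilde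

/-- The mean-square asymptotic
`(1/2T) ∫_{-T}^{T} |φ(σ+it)|² dt → ∑_{n≥1} |a_φ(n)|² n^{-2σ}` at the abscissa `σ`. -/
def msOK (φ : SClassTilde) (σ : ℝ) : Prop :=
  Filter.Tendsto
    (fun T : ℝ => (1 / (2 * T)) * ∫ t in (-T)..T, ‖φ.toFun (σ + t * Complex.I)‖ ^ 2)
    Filter.atTop (nhds (∑' n : ℕ, ‖φ.a n‖ ^ 2 / (n : ℝ) ^ (2 * σ)))

/-- `σ_φ`, the infimum of all `σ₂ ≥ 1/2` such that the mean-square asymptotic holds for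
every `σ ≥ σ₂`. (The value `1` is always admissible.) -/
def σφ (φ : SClassTilde) : ℝ :=
  sInf ({σ₂ : ℝ | 1 / 2 ≤ σ₂ ∧ ∀ σ : ℝ, σ₂ ≤ σ → φ.msOK σ} ∪ {1})

/-- The strip `D_φ = {s : σ_φ < Re s < 1}`. -/
def domain (φ : SClassTilde) : Set ℂ := Strip φ.σφ 1

/-- The multiplicative extension `ω(n)` of `ω ∈ Ω` to all positive integers. -/
def omegaMul (ω : ProdCircle) (n : ℕ) : ℂ :=
  n.factorization.prod fun p e =>
    (if hp : p.Prime then ((ω ⟨p, hp⟩ : Circle) : ℂ) else 1) ^ e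

/-- The random Euler product `φ(s, ω) = ∏_p ∏_j (1 - α_{j,φ}(p) ω(p) p^{-s})⁻¹`. -/
def randEuler (φ : SClassTilde) (ω : ProdCircle) : ℂ → ℂ := fun s =>
  ∏' p : Nat.Primes, ∏ j : Fin φ.m, (1 - φ.α j p * (ω p : ℂ) * ((p : ℕ) : ℂ) ^ (-s))⁻¹

/-- The random Dirichlet series `φ(s, ω) = ∑_{n≥1} a_φ(n) ω(n) n^{-s}`. -/
def randSeries (φ : SClassTilde) (ω : ProdCircle) : ℂ → ℂ := fun s =>
  ∑' n : ℕ, φ.a n * omegaMul ω n / (n : ℂ) ^ s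

/-- `log φ_p(s, z) = -∑_{j=1}^{m_φ} Log (1 - α_{j,φ}(p) z p^{-s})`, with the principal
branch of the logarithm. -/
def logFactor (φ : SClassTilde) (p : Nat.Primes) (z : ℂ) (s : ℂ) : ℂ :=
  -∑ j : Fin φ.m, Complex.log (1 - φ.α j p * z * ((p : ℕ) : ℂ) ^ (-s))

/-- The random logarithm `log φ(s, ω) = ∑_p log φ_p(s, ω(p))` (primes summed in increasing
order; junk value where the series diverges). -/
def logRand (φ : SClassTilde) (ω : ProdCircle) : ℂ → ℂ := fun s =>
  limUnder Filter.atTop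
    (fun M : ℕ => ∑ i ∈ Finset.range M, logFactor φ (nthPrime i) (ω (nthPrime i)) s)

end SClassTilde

/-- The denseness assumption of the main theorem: for every `X > 0`, the set of all
convergent tuples `(∑_{p > X} a_{φ_j}(p) c(p) p^{-s})_{j=1}^r` with `c(p) ∈ 𝕋` is dense in
`∏_j H(D_{φ_j})`; convergence in `H(D_{φ_j})` is locally uniform convergence on `D_{φ_j}`
of the partial sums over the primes in increasing order. -/
def DenseTails {r : ℕ} (φ : Fin r → SClassTilde) : Prop :=
  ∀ X : ℝ, 0 < X →
    Dense {g : ∀ j : Fin r, Hol (φ j).domain |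
      ∃ c : Nat.Primes → Circle, ∀ j,
        TendstoLocallyUniformly
          (fun (M : ℕ) (z : (φ j).domain) => ∑ i ∈ Finset.range M,
            if X < ((nthPrime i : ℕ) : ℝ) then
              (φ j).a (nthPrime i) * (c (nthPrime i) : ℂ) * (((nthPrime i : ℕ) : ℂ)) ^ (-(z : ℂ))
            else 0)
          (fun z => (g j).val z) Filter.atTop}


namespace RMPG
open SClassTilde ComplexConjugate

open ComplexConjugate

instance : IsFiniteMeasure haarOmega := by unfold haarOmega; infer_instance
instance : haarOmega.IsMulLeftInvariant := by unfold haarOmega; infer_instance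

lemma continuous_omegaMul (n : ℕ) : Continuous fun ω : ProdCircle => omegaMul ω n := by
  simp only [omegaMul, Finsupp.prod]
  refine continuous_finset_prod _ (fun p hp => ?_)
  by_cases hpp : p.Prime
  · simp only [dif_pos hpp]
    exact (continuous_subtype_val.comp (continuous_apply (⟨p, hpp⟩ : Nat.Primes))).pow _
  · simp only [dif_neg hpp]
    exact continuous_const

lemma integrable_cont {f : ProdCircle → ℂ} (hf : Continuous f) : Integrable f haarOmega :=
  hf.integrable_of_hasCompactSupport (HasCompactSupport.of_compactSpace f)

lemma norm_omegaMul (ω : ProdCircle) (n : ℕ) : ‖omegaMul ω n‖ = 1 := by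
  rw [omegaMul, Finsupp.prod, norm_prod]
  refine Finset.prod_eq_one (fun p hp => ?_)
  rw [norm_pow]
  by_cases hpp : p.Prime
  · simp [dif_pos hpp, Circle.norm_coe]
  · simp [dif_neg hpp]

lemma omegaMul_mul (g ω : ProdCircle) (n : ℕ) :
    omegaMul (g * ω) n = omegaMul g n * omegaMul ω n := by
  simp only [omegaMul, Finsupp.prod]
  rw [← Finset.prod_mul_distrib]
  refine Finset.prod_congr rfl (fun p hp => ?_)
  by_cases hpp : p.Prime
  · simp only [dif_pos hpp]
    rw [show (g * ω) ⟨p, hpp⟩ = g ⟨p, hpp⟩ * ω ⟨p, hpp⟩ from rfl, Circle.coe_mul, mul_pow]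
  · simp [dif_neg hpp]

lemma omegaMul_gsingle (q : Nat.Primes) (z : Circle) (n : ℕ) :
    omegaMul (fun p => if p = q then z else 1) n = (z:ℂ) ^ (n.factorization (q:ℕ)) := by
  rw [omegaMul, Finsupp.prod]
  rw [Finset.prod_eq_single (q:ℕ)]
  · simp [q.2, Subtype.coe_eta]
    split_ifs with hc
    · rfl
    · exact absurd rfl hc
  · intro p hp hpq
    by_cases hpp : p.Prime
    · have : (⟨p, hpp⟩ : Nat.Primes) ≠ q := fun hc => hpq (by rw [← hc])
      simp [dif_pos hpp, this]
      split_ifs with hc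
      · exact (this hc).elim
      · simp
    · simp [dif_neg hpp]
  · intro hq
    rw [Finsupp.notMem_support_iff.mp hq]
    simp

lemma integral_omegaMul_conj {n m : ℕ} (hn : n ≠ 0) (hm : m ≠ 0) (hnm : n ≠ m) :
    ∫ ω, omegaMul ω n * conj (omegaMul ω m) ∂haarOmega = 0 := by
  have hex : ¬ ∀ p : ℕ, n.factorization p = m.factorization p := by
    intro hall
    exact hnm (Nat.factorization_inj hn hm (Finsupp.ext hall))
  push_neg at hex
  obtain ⟨p0, hp0⟩ := hex
  have hp0p : p0.Prime := by
    by_contra hnp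
    rw [Nat.factorization_eq_zero_of_not_prime n hnp,
        Nat.factorization_eq_zero_of_not_prime m hnp] at hp0
    exact hp0 rfl
  set q : Nat.Primes := ⟨p0, hp0p⟩ with hq
  set e := n.factorization p0 with he
  set f := m.factorization p0 with hf
  have hd : ((e:ℤ) - f : ℤ) ≠ 0 := sub_ne_zero.mpr (by exact_mod_cast hp0)
  have hdR : ((e:ℝ) - f) ≠ 0 := by
    intro hc
    apply hd
    have : ((e:ℝ) - f) = (((e:ℤ) - f : ℤ) : ℝ) := by push_cast; ring
    rw [this] at hc
    exact_mod_cast hc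
  set θ : ℝ := Real.pi / ((e:ℝ) - f) with hθ
  set z : Circle := Circle.exp θ with hz
  set g : ProdCircle := fun p => if p = q then z else 1 with hg
  have hzpow : (z:ℂ)^e * conj ((z:ℂ)^f) = -1 := by
    rw [map_pow, hz, Circle.coe_exp, ← Complex.exp_conj, map_mul, Complex.conj_ofReal,
      Complex.conj_I, ← Complex.exp_nat_mul, ← Complex.exp_nat_mul, ← Complex.exp_add]
    have h1 : (e:ℂ) * ((θ:ℂ) * I) + (f:ℂ) * ((θ:ℂ) * -I) = (((e:ℝ) - f) * θ : ℝ) * I := by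
      push_cast; ring
    rw [h1]
    have h2 : ((e:ℝ) - f) * θ = Real.pi := by
      rw [hθ]; field_simp
    rw [h2]
    exact Complex.exp_pi_mul_I
  have key : ∀ ω : ProdCircle, omegaMul (g * ω) n * conj (omegaMul (g * ω) m)
      = (-1) * (omegaMul ω n * conj (omegaMul ω m)) := by
    intro ω
    rw [omegaMul_mul, omegaMul_mul, omegaMul_gsingle, omegaMul_gsingle]
    calc ((z:ℂ)^e * omegaMul ω n) * conj ((z:ℂ)^f * omegaMul ω m)
        = ((z:ℂ)^e * conj ((z:ℂ)^f)) * (omegaMul ω n * conj (omegaMul ω m)) := by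
          rw [map_mul]; ring
      _ = (-1) * (omegaMul ω n * conj (omegaMul ω m)) := by rw [hzpow]
  have hinv := MeasureTheory.integral_mul_left_eq_self
    (μ := haarOmega) (fun ω => omegaMul ω n * conj (omegaMul ω m)) g
  simp only [key] at hinv
  rw [MeasureTheory.integral_const_mul] at hinv
  linear_combination (-1/2 : ℂ) * hinv

lemma integral_omegaMul_self (n : ℕ) :
    ∫ ω, omegaMul ω n * conj (omegaMul ω n) ∂haarOmega = ((haarOmega Set.univ).toReal : ℂ) := by
  have hpt : ∀ ω : ProdCircle, omegaMul ω n * conj (omegaMul ω n) = 1 := by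
    intro ω
    rw [Complex.mul_conj, Complex.normSq_eq_norm_sq, norm_omegaMul]
    norm_num
  simp only [hpt]
  rw [MeasureTheory.integral_const]
  simp
  rfl


lemma continuous_sumW (γ : ℕ → ℂ) (I : Finset ℕ) :
    Continuous fun ω : ProdCircle => ∑ n ∈ I, γ n * omegaMul ω n :=
  continuous_finset_sum _ fun n _ => continuous_const.mul (continuous_omegaMul n)

lemma integral_norm_sq (γ : ℕ → ℂ) (I : Finset ℕ) (hI : ∀ n ∈ I, n ≠ 0) :
    ∫ ω, ‖∑ n ∈ I, γ n * omegaMul ω n‖^2 ∂haarOmega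
      = (haarOmega Set.univ).toReal * ∑ n ∈ I, ‖γ n‖^2 := by
  set κ0 := (haarOmega Set.univ).toReal with hκ0
  have hWint : ∀ n m : ℕ, Integrable
      (fun ω => (γ n * conj (γ m)) * (omegaMul ω n * conj (omegaMul ω m))) haarOmega := by
    intro n m
    apply integrable_cont
    exact continuous_const.mul ((continuous_omegaMul n).mul ((continuous_omegaMul m).star))
  have hF : ∀ ω : ProdCircle,
      ((∑ n ∈ I, γ n * omegaMul ω n) * conj (∑ n ∈ I, γ n * omegaMul ω n))
      = ∑ n ∈ I, ∑ m ∈ I, (γ n * conj (γ m)) * (omegaMul ω n * conj (omegaMul ω m)) := by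
    intro ω
    rw [map_sum, Finset.sum_mul_sum]
    refine Finset.sum_congr rfl (fun n _ => Finset.sum_congr rfl (fun m _ => ?_))
    rw [map_mul]; ring
  have hFint : Integrable (fun ω => (∑ n ∈ I, γ n * omegaMul ω n)
      * conj (∑ n ∈ I, γ n * omegaMul ω n)) haarOmega :=
    integrable_cont ((continuous_sumW γ I).mul (continuous_sumW γ I).star)
  have hsum : ∫ ω, ((∑ n ∈ I, γ n * omegaMul ω n) * conj (∑ n ∈ I, γ n * omegaMul ω n)) ∂haarOmega
      = ∑ n ∈ I, ∑ m ∈ I, (γ n * conj (γ m))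
          * ∫ ω, omegaMul ω n * conj (omegaMul ω m) ∂haarOmega := by
    simp only [hF]
    rw [integral_finset_sum _ (fun n _ => integrable_finset_sum _ (fun m _ => hWint n m))]
    refine Finset.sum_congr rfl fun n _ => ?_
    rw [integral_finset_sum _ (fun m _ => hWint n m)]
    exact Finset.sum_congr rfl fun m _ => MeasureTheory.integral_const_mul _ _
  have hdiag : ∀ n ∈ I, (∑ m ∈ I, (γ n * conj (γ m))
      * ∫ ω, omegaMul ω n * conj (omegaMul ω m) ∂haarOmega) = ((‖γ n‖^2 * κ0 : ℝ) : ℂ) := by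
    intro n hn
    rw [Finset.sum_eq_single_of_mem n hn]
    · rw [integral_omegaMul_self, Complex.mul_conj, Complex.normSq_eq_norm_sq]
      push_cast; ring
    · intro m hm hne
      rw [integral_omegaMul_conj (hI n hn) (hI m hm) (Ne.symm hne), mul_zero]
  have hptreal : ∀ ω : ProdCircle, (‖∑ n ∈ I, γ n * omegaMul ω n‖^2 : ℝ)
      = ((∑ n ∈ I, γ n * omegaMul ω n) * conj (∑ n ∈ I, γ n * omegaMul ω n)).re := by
    intro ω
    rw [Complex.mul_conj, Complex.normSq_eq_norm_sq, Complex.ofReal_re]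
  calc ∫ ω, ‖∑ n ∈ I, γ n * omegaMul ω n‖^2 ∂haarOmega
      = ∫ ω, ((∑ n ∈ I, γ n * omegaMul ω n) * conj (∑ n ∈ I, γ n * omegaMul ω n)).re ∂haarOmega := by
        simp only [hptreal]
    _ = (∫ ω, ((∑ n ∈ I, γ n * omegaMul ω n) * conj (∑ n ∈ I, γ n * omegaMul ω n)) ∂haarOmega).re := by
        have := Complex.reCLM.integral_comp_comm hFint
        simp only [Complex.reCLM_apply] at this
        exact this
    _ = (∑ n ∈ I, ((‖γ n‖^2 * κ0 : ℝ) : ℂ)).re := by rw [hsum, Finset.sum_congr rfl hdiag]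
    _ = κ0 * ∑ n ∈ I, ‖γ n‖^2 := by
        rw [← Complex.ofReal_sum, Complex.ofReal_re, ← Finset.sum_mul]
        ring



variable (X : ℕ → ℂ)

def Dblk (k l i : ℕ) : ℂ := ∑ n ∈ Finset.Ico (2^k + i*2^l) (2^k + (i+1)*2^l), X n

def Abd (k l : ℕ) : ℝ := Real.sqrt (∑ i ∈ Finset.range (2^(k-l)), ‖Dblk X k l i‖^2)

def ubd (k : ℕ) : ℝ := ∑ l ∈ Finset.range (k+1), Abd X k l

lemma Abd_nonneg (k l : ℕ) : 0 ≤ Abd X k l := Real.sqrt_nonneg _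

lemma ubd_nonneg (k : ℕ) : 0 ≤ ubd X k :=
  Finset.sum_nonneg fun _ _ => Abd_nonneg X _ _

lemma norm_Dblk_le {k l i : ℕ} (hi : i < 2^(k-l)) : ‖Dblk X k l i‖ ≤ Abd X k l := by
  have h1 : (fun i => ‖Dblk X k l i‖^2) i ≤ ∑ i ∈ Finset.range (2^(k-l)), ‖Dblk X k l i‖^2 :=
    Finset.single_le_sum (f := fun i => ‖Dblk X k l i‖^2) (fun _ _ => sq_nonneg _)
      (Finset.mem_range.mpr hi)
  calc ‖Dblk X k l i‖ = Real.sqrt (‖Dblk X k l i‖^2) := (Real.sqrt_sq (norm_nonneg _)).symm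
  _ ≤ _ := Real.sqrt_le_sqrt h1

lemma prefix_le : ∀ l k, l ≤ k → ∀ j m, j < 2^(k-l) → m ≤ 2^l →
    ‖∑ n ∈ Finset.Ico (2^k + j*2^l) (2^k + j*2^l + m), X n‖
      ≤ Abd X k 0 + ∑ l' ∈ Finset.range l, Abd X k l' := by
  intro l
  induction l with
  | zero =>
    intro k hk j m hj hm
    simp only [pow_zero, mul_one] at hj hm ⊢
    have hA0 := Abd_nonneg X k 0
    interval_cases m
    · simp [hA0]
    · have hD : Dblk X k 0 j = ∑ n ∈ Finset.Ico (2^k + j) (2^k + j + 1), X n := by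
        simp only [Dblk, pow_zero, mul_one]
        rw [show 2^k + (j+1) = 2^k + j + 1 by omega]
      rw [← hD]
      simpa using norm_Dblk_le X (by simpa using hj)
  | succ l ih =>
    intro k hk j m hj hm
    have hlk : l ≤ k := le_trans (Nat.le_succ l) hk
    have h2 : 2^(k-l) = 2^(k-(l+1)) * 2 := by
      rw [← pow_succ]; congr 1; omega
    by_cases hm2 : m ≤ 2^l
    · have hj2 : 2*j < 2^(k-l) := by omega
      have harith : 2^k + j*2^(l+1) = 2^k + (2*j)*2^l := by rw [pow_succ]; ring
      rw [harith]
      refine (ih k hlk (2*j) m hj2 hm2).trans ?_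
      exact add_le_add_right (Finset.sum_le_sum_of_subset_of_nonneg
        (Finset.range_subset_range.mpr (Nat.le_succ l)) (fun i _ _ => Abd_nonneg X k i)) _
    · push_neg at hm2
      obtain ⟨m', rfl⟩ : ∃ m', m = 2^l + m' := ⟨m - 2^l, by omega⟩
      have hps : (2:ℕ)^(l+1) = 2^l*2 := pow_succ 2 l
      have hm' : m' ≤ 2^l := by omega
      have hab : 2^k + (2*j)*2^l ≤ 2^k + (2*j+1)*2^l :=
        Nat.add_le_add_left (Nat.mul_le_mul_right _ (by omega)) _
      have hsplit := Finset.sum_Ico_consecutive X hab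
        (Nat.le_add_right (2^k + (2*j+1)*2^l) m')
      rw [show 2^k + j*2^(l+1) = 2^k + (2*j)*2^l by rw [pow_succ]; ring]
      rw [show 2^k + (2*j)*2^l + (2^l + m') = 2^k + (2*j+1)*2^l + m' by ring]
      rw [← hsplit]
      have hfirst : ‖∑ n ∈ Finset.Ico (2^k + (2*j)*2^l) (2^k + (2*j+1)*2^l), X n‖ ≤ Abd X k l := by
        have : (∑ n ∈ Finset.Ico (2^k + (2*j)*2^l) (2^k + (2*j+1)*2^l), X n) = Dblk X k l (2*j) := rfl
        rw [this]
        exact norm_Dblk_le X (by omega)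
      have hsecond := ih k hlk (2*j+1) m' (by omega) hm'
      refine (norm_add_le _ _).trans ?_
      rw [Finset.sum_range_succ]
      linarith

lemma initial_le : ∀ κ M, M ≤ 2^κ → ‖∑ n ∈ Finset.Ico 1 M, X n‖ ≤ ∑ k ∈ Finset.range κ, 2 * ubd X k := by
  intro κ
  induction κ with
  | zero =>
    intro M hM
    have : (2:ℕ)^0 = 1 := pow_zero 2
    interval_cases M <;> simp
  | succ κ ih =>
    intro M hM
    by_cases h : M ≤ 2^κ
    · refine (ih M h).trans ?_
      exact Finset.sum_le_sum_of_subset_of_nonneg (Finset.range_subset_range.mpr (Nat.le_succ κ))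
        (fun i _ _ => by have := ubd_nonneg X i; linarith)
    · push_neg at h
      have hps : (2:ℕ)^(κ+1) = 2^κ*2 := pow_succ 2 κ
      have h1 : (1:ℕ) ≤ 2^κ := Nat.one_le_two_pow
      obtain ⟨m, rfl⟩ : ∃ m, M = 2^κ + m := ⟨M - 2^κ, by omega⟩
      have hm : m ≤ 2^κ := by omega
      rw [← Finset.sum_Ico_consecutive X (by omega : (1:ℕ) ≤ 2^κ) (Nat.le_add_right _ m)]
      refine (norm_add_le _ _).trans ?_
      have hfirst := ih (2^κ) le_rfl
      have hpre := prefix_le X κ κ le_rfl 0 m (by simp) (by omega)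
      simp only [Nat.zero_mul, Nat.add_zero] at hpre
      have hA0 : Abd X κ 0 ≤ ubd X κ :=
        Finset.single_le_sum (f := fun l => Abd X κ l) (fun i _ => Abd_nonneg X κ i)
          (Finset.mem_range.mpr (Nat.succ_pos κ))
      have hsum : ∑ l' ∈ Finset.range κ, Abd X κ l' ≤ ubd X κ :=
        Finset.sum_le_sum_of_subset_of_nonneg (Finset.range_subset_range.mpr (Nat.le_succ κ))
          (fun i _ _ => Abd_nonneg X κ i)
      rw [Finset.sum_range_succ]
      linarith

lemma bounded_of_ubd (hX0 : X 0 = 0) (U : ℝ) (hU : ∀ κ, ∑ k ∈ Finset.range κ, ubd X k ≤ U) :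
    ∀ M, ‖∑ n ∈ Finset.range M, X n‖ ≤ 2*U := by
  intro M
  have hU0 : 0 ≤ U := by have := hU 0; simpa using this
  rcases Nat.eq_zero_or_pos M with hM | hM
  · subst hM; simpa using by linarith
  · have hsplit : ∑ n ∈ Finset.range M, X n = ∑ n ∈ Finset.Ico 1 M, X n := by
      rw [Finset.range_eq_Ico, Finset.sum_eq_sum_Ico_succ_bot hM, hX0, zero_add]
    rw [hsplit]
    have hM2 : M ≤ 2^M := Nat.le_of_lt Nat.lt_two_pow_self
    refine (initial_le X M M hM2).trans ?_
    calc ∑ k ∈ Finset.range M, 2 * ubd X k = 2 * ∑ k ∈ Finset.range M, ubd X k := by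
          rw [Finset.mul_sum]
    _ ≤ 2 * U := by have := hU M; linarith



def Xf (γ : ℕ → ℂ) (ω : ProdCircle) : ℕ → ℂ := fun n => γ n * omegaMul ω n

lemma continuous_Abd (γ : ℕ → ℂ) (k l : ℕ) :
    Continuous fun ω : ProdCircle => Abd (Xf γ ω) k l := by
  apply Real.continuous_sqrt.comp
  apply continuous_finset_sum
  intro i _
  have : Continuous fun ω : ProdCircle => Dblk (Xf γ ω) k l i := continuous_sumW γ _
  exact (this.norm).pow 2

lemma continuous_ubd (γ : ℕ → ℂ) (k : ℕ) :
    Continuous fun ω : ProdCircle => ubd (Xf γ ω) k :=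
  continuous_finset_sum _ fun l _ => continuous_Abd γ k l

section estimates

variable (γ : ℕ → ℂ) (K η : ℝ)

lemma block_sq_sum_le (hη : 0 < η) (hK : 0 ≤ K)
    (hγ : ∀ n : ℕ, 1 ≤ n → ‖γ n‖ ≤ K * (n:ℝ)^(-(1/2+η))) (k : ℕ) :
    ∑ n ∈ Finset.Ico (2^k) (2^(k+1)), ‖γ n‖^2
      ≤ K^2 * (((2:ℝ)^(-η : ℝ))^k)^2 := by
  set N : ℕ := 2^k with hN
  have hN1 : 1 ≤ N := Nat.one_le_two_pow
  have hNpos : (0:ℝ) < (N:ℝ) := by positivity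
  have hterm : ∀ n ∈ Finset.Ico (2^k) (2^(k+1)), ‖γ n‖^2 ≤ (K * (N:ℝ)^(-(1/2+η)))^2 := by
    intro n hn
    rw [Finset.mem_Ico] at hn
    have hn1 : 1 ≤ n := le_trans hN1 hn.1
    have hle : (N:ℝ) ≤ (n:ℝ) := by exact_mod_cast hn.1
    have h1 : ‖γ n‖ ≤ K * (n:ℝ)^(-(1/2+η)) := hγ n hn1
    have h2 : (n:ℝ)^(-(1/2+η)) ≤ (N:ℝ)^(-(1/2+η)) :=
      Real.rpow_le_rpow_of_nonpos hNpos hle (by linarith)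
    have h3 : ‖γ n‖ ≤ K * (N:ℝ)^(-(1/2+η)) := h1.trans (by nlinarith [Real.rpow_nonneg (le_of_lt hNpos) (-(1/2+η))])
    exact pow_le_pow_left₀ (norm_nonneg _) h3 2
  have hcard : (Finset.Ico (2^k) (2^(k+1))).card = N := by
    rw [Nat.card_Ico]
    have : (2:ℕ)^(k+1) = 2^k * 2 := pow_succ 2 k
    omega
  have hsum := Finset.sum_le_card_nsmul _ _ _ hterm
  rw [hcard, nsmul_eq_mul] at hsum
  refine hsum.trans (le_of_eq ?_)
  -- (N:ℝ) * (K * N^(-(1/2+η)))^2 = K^2 * ((2^(-η))^k)^2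
  have hcast : (N:ℝ) = (2:ℝ)^(k:ℝ) := by
    rw [hN]
    push_cast
    rw [Real.rpow_natCast]
  have hρ : ((2:ℝ)^(-η : ℝ))^k = (2:ℝ)^((-η) * k : ℝ) := by
    rw [← Real.rpow_natCast ((2:ℝ)^(-η:ℝ)) k, ← Real.rpow_mul (by norm_num)]
  rw [hcast, hρ]
  have h2 : (0:ℝ) ≤ 2 := by norm_num
  have h2' : (0:ℝ) < 2 := by norm_num
  rw [← Real.rpow_mul h2]
  rw [mul_pow]
  rw [← Real.rpow_natCast ((2:ℝ) ^ ((k:ℝ) * -(1/2+η))) 2,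
      ← Real.rpow_natCast ((2:ℝ) ^ (-η*(k:ℝ))) 2]
  rw [← Real.rpow_mul h2, ← Real.rpow_mul h2]
  have hcomb : (2:ℝ)^(k:ℝ) * (2:ℝ)^(((k:ℝ) * -(1/2+η)) * ((2:ℕ):ℝ))
      = (2:ℝ)^((-η*(k:ℝ)) * ((2:ℕ):ℝ)) := by
    rw [← Real.rpow_add h2']
    congr 1
    push_cast
    ring
  calc (2:ℝ)^(k:ℝ) * (K^2 * (2:ℝ)^(((k:ℝ) * -(1/2+η)) * ((2:ℕ):ℝ)))
      = K^2 * ((2:ℝ)^(k:ℝ) * (2:ℝ)^(((k:ℝ) * -(1/2+η)) * ((2:ℕ):ℝ))) := by ring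
    _ = K^2 * (2:ℝ)^((-η*(k:ℝ)) * ((2:ℕ):ℝ)) := by rw [hcomb]


lemma integrable_cont_real {f : ProdCircle → ℝ} (hf : Continuous f) : Integrable f haarOmega :=
  hf.integrable_of_hasCompactSupport (HasCompactSupport.of_compactSpace f)

lemma sum_blocks (f : ℕ → ℝ) (a b : ℕ) : ∀ N : ℕ,
    ∑ i ∈ Finset.range N, ∑ n ∈ Finset.Ico (a + i*b) (a + (i+1)*b), f n
      = ∑ n ∈ Finset.Ico a (a + N*b), f n := by
  intro N
  induction N with
  | zero => simp
  | succ N ih =>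
    rw [Finset.sum_range_succ, ih,
      Finset.sum_Ico_consecutive f (Nat.le_add_right a (N*b))
        (by have : N*b ≤ (N+1)*b := Nat.mul_le_mul_right b (Nat.le_succ N); omega)]

lemma lint_Abd (hη : 0 < η) (hK : 0 ≤ K)
    (hγ : ∀ n : ℕ, 1 ≤ n → ‖γ n‖ ≤ K * (n:ℝ)^(-(1/2+η))) (k l : ℕ) (hlk : l ≤ k) :
    ∫⁻ ω, ENNReal.ofReal (Abd (Xf γ ω) k l) ∂haarOmega
      ≤ ENNReal.ofReal (Real.sqrt ((haarOmega Set.univ).toReal * K^2) * ((2:ℝ)^(-η:ℝ))^k)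
        * (haarOmega Set.univ) ^ ((1:ℝ)/2) := by
  set κ0 := (haarOmega Set.univ).toReal with hκ0
  have hκ0nn : 0 ≤ κ0 := ENNReal.toReal_nonneg
  have hρnn : (0:ℝ) ≤ ((2:ℝ)^(-η:ℝ))^k := by positivity
  have hfm : AEMeasurable (fun ω => ENNReal.ofReal (Abd (Xf γ ω) k l)) haarOmega :=
    ((continuous_Abd γ k l).measurable.ennreal_ofReal).aemeasurable
  have hconj : (2:ℝ).HolderConjugate 2 := Real.HolderConjugate.two_two
  have hold := ENNReal.lintegral_mul_le_Lp_mul_Lq haarOmega hconj hfm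
    (aemeasurable_const (b := (1:ENNReal)))
  simp only [Pi.mul_apply, mul_one, ENNReal.one_rpow, lintegral_one] at hold
  -- compute ∫⁻ f^2
  have hsq : ∀ ω : ProdCircle, (ENNReal.ofReal (Abd (Xf γ ω) k l)) ^ (2:ℝ)
      = ENNReal.ofReal (∑ i ∈ Finset.range (2^(k-l)), ‖Dblk (Xf γ ω) k l i‖^2) := by
    intro ω
    rw [ENNReal.ofReal_rpow_of_nonneg (Abd_nonneg _ _ _) (by norm_num : (0:ℝ) ≤ 2)]
    congr 1
    rw [show ((2:ℝ)) = ((2:ℕ):ℝ) by norm_num, Real.rpow_natCast]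
    rw [Abd, Real.sq_sqrt (Finset.sum_nonneg fun _ _ => sq_nonneg _)]
  have hIblk : ∀ i, ∀ n ∈ Finset.Ico (2^k + i*2^l) (2^k + (i+1)*2^l), n ≠ 0 := by
    intro i n hn
    rw [Finset.mem_Ico] at hn
    have h1 : (1:ℕ) ≤ 2^k := Nat.one_le_two_pow
    have := hn.1
    omega
  have hint : ∫ ω, (∑ i ∈ Finset.range (2^(k-l)), ‖Dblk (Xf γ ω) k l i‖^2) ∂haarOmega
      = κ0 * ∑ n ∈ Finset.Ico (2^k) (2^(k+1)), ‖γ n‖^2 := by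
    rw [integral_finset_sum]
    · have heach : ∀ i ∈ Finset.range (2^(k-l)),
          ∫ ω, ‖Dblk (Xf γ ω) k l i‖^2 ∂haarOmega
            = κ0 * ∑ n ∈ Finset.Ico (2^k + i*2^l) (2^k + (i+1)*2^l), ‖γ n‖^2 := by
        intro i _
        exact integral_norm_sq γ _ (hIblk i)
      rw [Finset.sum_congr rfl heach, ← Finset.mul_sum]
      congr 1
      have hend : 2^k + 2^(k-l)*2^l = 2^(k+1) := by
        have h1 : 2^(k-l)*2^l = 2^k := by rw [← pow_add]; congr 1; omega
        have h2 : (2:ℕ)^(k+1) = 2^k*2 := pow_succ 2 k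
        omega
      rw [sum_blocks, hend]
    · intro i _
      apply integrable_cont_real
      exact ((continuous_sumW γ _).norm).pow 2
  have hlim : ∫⁻ ω, (ENNReal.ofReal (Abd (Xf γ ω) k l)) ^ (2:ℝ) ∂haarOmega
      ≤ ENNReal.ofReal (κ0 * (K^2 * (((2:ℝ)^(-η:ℝ))^k)^2)) := by
    simp only [hsq]
    have hInt : Integrable
        (fun ω : ProdCircle => ∑ i ∈ Finset.range (2^(k-l)), ‖Dblk (Xf γ ω) k l i‖^2) haarOmega :=
      integrable_cont_real (continuous_finset_sum _ fun i _ => ((continuous_sumW γ _).norm).pow 2)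
    rw [← MeasureTheory.ofReal_integral_eq_lintegral_ofReal hInt
      (Filter.Eventually.of_forall fun ω => Finset.sum_nonneg fun _ _ => sq_nonneg _)]
    apply ENNReal.ofReal_le_ofReal
    rw [hint]
    exact mul_le_mul_of_nonneg_left (block_sq_sum_le γ K η hη hK hγ k) hκ0nn
  refine hold.trans ?_
  refine mul_le_mul' ?_ le_rfl
  have := ENNReal.rpow_le_rpow hlim (by norm_num : (0:ℝ) ≤ 1/2)
  refine this.trans (le_of_eq ?_)
  rw [ENNReal.ofReal_rpow_of_nonneg (by positivity) (by norm_num : (0:ℝ) ≤ 1/2)]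
  congr 1
  rw [← Real.sqrt_eq_rpow]
  rw [show κ0 * (K^2 * (((2:ℝ)^(-η:ℝ))^k)^2) = (κ0 * K^2) * (((2:ℝ)^(-η:ℝ))^k)^2 by ring]
  rw [Real.sqrt_mul (by positivity), Real.sqrt_sq hρnn]

lemma lint_R_lt_top (hη : 0 < η) (hK : 0 ≤ K)
    (hγ : ∀ n : ℕ, 1 ≤ n → ‖γ n‖ ≤ K * (n:ℝ)^(-(1/2+η))) :
    ∫⁻ ω, (∑' k : ℕ, ENNReal.ofReal (ubd (Xf γ ω) k)) ∂haarOmega < ⊤ := by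
  set ρ := (2:ℝ)^(-η:ℝ) with hρdef
  set c1 := Real.sqrt ((haarOmega Set.univ).toReal * K^2) with hc1
  set C := (haarOmega Set.univ) ^ ((1:ℝ)/2) with hC
  have hρpos : 0 < ρ := Real.rpow_pos_of_pos (by norm_num) _
  have hρlt1 : ρ < 1 := Real.rpow_lt_one_of_one_lt_of_neg (by norm_num) (by linarith)
  have hCne : C ≠ ⊤ := ENNReal.rpow_ne_top_of_nonneg (by norm_num) (measure_ne_top _ _)
  rw [MeasureTheory.lintegral_tsum
    (fun k => ((continuous_ubd γ k).measurable.ennreal_ofReal).aemeasurable)]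
  have hbk : ∀ k : ℕ, ∫⁻ ω, ENNReal.ofReal (ubd (Xf γ ω) k) ∂haarOmega
      ≤ ENNReal.ofReal (((k:ℝ)+1) * (c1 * ρ^k)) * C := by
    intro k
    have h1 : ∀ ω : ProdCircle, ENNReal.ofReal (ubd (Xf γ ω) k)
        = ∑ l ∈ Finset.range (k+1), ENNReal.ofReal (Abd (Xf γ ω) k l) := by
      intro ω
      rw [ubd, ENNReal.ofReal_sum_of_nonneg (fun l _ => Abd_nonneg _ _ _)]
    simp only [h1]
    rw [MeasureTheory.lintegral_finset_sum _
      (fun l _ => ((continuous_Abd γ k l).measurable.ennreal_ofReal))]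
    have h2 : ∀ l ∈ Finset.range (k+1),
        ∫⁻ ω, ENNReal.ofReal (Abd (Xf γ ω) k l) ∂haarOmega ≤ ENNReal.ofReal (c1 * ρ^k) * C :=
      fun l hl => lint_Abd γ K η hη hK hγ k l (by rw [Finset.mem_range] at hl; omega)
    refine (Finset.sum_le_sum h2).trans ?_
    rw [Finset.sum_const, Finset.card_range, nsmul_eq_mul, ← mul_assoc]
    refine mul_le_mul' (le_of_eq ?_) le_rfl
    rw [show ((k+1 : ℕ):ENNReal) = ENNReal.ofReal ((k:ℝ)+1) by
        rw [← ENNReal.ofReal_natCast (k+1)]; congr 1; push_cast; ring]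
    rw [← ENNReal.ofReal_mul (by positivity)]
  refine (ENNReal.tsum_le_tsum hbk).trans_lt ?_
  rw [ENNReal.tsum_mul_right]
  have hsumm : Summable (fun k : ℕ => ((k:ℝ)+1) * (c1 * ρ^k)) := by
    have h1 : Summable (fun k : ℕ => (k:ℝ) * ρ^k) := by
      have := summable_pow_mul_geometric_of_norm_lt_one 1 (r := ρ)
        (by rw [Real.norm_eq_abs, abs_of_pos hρpos]; exact hρlt1)
      simpa using this
    have h2 : Summable (fun k : ℕ => ρ^k) := summable_geometric_of_lt_one (le_of_lt hρpos) hρlt1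
    exact ((h1.add h2).mul_left c1).congr (fun k => by ring)
  rw [← ENNReal.ofReal_tsum_of_nonneg (fun k => by positivity) hsumm]
  exact ENNReal.mul_lt_top ENNReal.ofReal_lt_top hCne.lt_top

lemma partA (hη : 0 < η) (hK : 0 ≤ K) (hγ0 : γ 0 = 0)
    (hγ : ∀ n : ℕ, 1 ≤ n → ‖γ n‖ ≤ K * (n:ℝ)^(-(1/2+η))) :
    ∀ᵐ ω ∂haarOmega, ∃ B : ℝ, 0 ≤ B ∧
      ∀ M, ‖∑ n ∈ Finset.range M, γ n * omegaMul ω n‖ ≤ B := by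
  have hmeas : Measurable fun ω : ProdCircle => (∑' k : ℕ, ENNReal.ofReal (ubd (Xf γ ω) k)) :=
    Measurable.ennreal_tsum (fun k => (continuous_ubd γ k).measurable.ennreal_ofReal)
  have hae := MeasureTheory.ae_lt_top hmeas (lint_R_lt_top γ K η hη hK hγ).ne
  filter_upwards [hae] with ω hω
  set U := (∑' k : ℕ, ENNReal.ofReal (ubd (Xf γ ω) k)).toReal with hUdef
  have hU : ∀ κ : ℕ, ∑ k ∈ Finset.range κ, ubd (Xf γ ω) k ≤ U := by
    intro κ
    have h1 : ENNReal.ofReal (∑ k ∈ Finset.range κ, ubd (Xf γ ω) k)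
        = ∑ k ∈ Finset.range κ, ENNReal.ofReal (ubd (Xf γ ω) k) :=
      ENNReal.ofReal_sum_of_nonneg (fun k _ => ubd_nonneg _ k)
    have h2 : (∑ k ∈ Finset.range κ, ENNReal.ofReal (ubd (Xf γ ω) k))
        ≤ ∑' k : ℕ, ENNReal.ofReal (ubd (Xf γ ω) k) := ENNReal.sum_le_tsum _
    have h3 := ENNReal.toReal_mono hω.ne (h1 ▸ h2)
    rwa [ENNReal.toReal_ofReal (Finset.sum_nonneg fun k _ => ubd_nonneg _ k)] at h3
  have hX0 : Xf γ ω 0 = 0 := by simp [Xf, hγ0]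
  have hU0 : 0 ≤ U := le_trans (by simp) (hU 0)
  refine ⟨2*U, by linarith, fun M => ?_⟩
  exact bounded_of_ubd (Xf γ ω) hX0 U hU M

end estimates


lemma abel_bound (Y : ℕ → ℂ) (B : ℝ) (hB : ∀ M, ‖∑ n ∈ Finset.range M, Y n‖ ≤ B)
    (w : ℂ) (δ : ℝ) (hδ : 0 < δ) (hw : δ ≤ w.re) (M : ℕ) :
    ‖∑ n ∈ Finset.range M, Y n * (n:ℂ)^(-w)‖ ≤ B * (3 + |w.im| / δ) := by
  have hB0 : 0 ≤ B := by simpa using hB 0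
  have hwre : 0 < w.re := lt_of_lt_of_le hδ hw
  have hw0 : w ≠ 0 := fun hc => by rw [hc] at hwre; simp at hwre
  have hwnn : 0 ≤ ‖w‖/w.re := by positivity
  have himd : 0 ≤ |w.im|/δ := by positivity
  set b : ℕ → ℂ := fun n => (n:ℂ)^(-w) with hbdef
  set r : ℕ → ℝ := fun n => ((n:ℝ))^(-w.re) with hrdef
  have hrnn : ∀ n, 0 ≤ r n := fun n => Real.rpow_nonneg (Nat.cast_nonneg n) _
  have hr1 : r 1 = 1 := by simp [hrdef]
  have hb0 : b 0 = 0 := by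
    simp only [hbdef, Nat.cast_zero]
    exact Complex.zero_cpow (neg_ne_zero.mpr hw0)
  have hbnorm : ∀ n, ‖b n‖ ≤ 1 := by
    intro n
    rcases Nat.eq_zero_or_pos n with hn | hn
    · subst hn; rw [hb0]; simp
    · rw [hbdef]
      rw [Complex.norm_natCast_cpow_of_pos hn]
      refine Real.rpow_le_one_of_one_le_of_nonpos (by exact_mod_cast hn) ?_
      simp only [Complex.neg_re]
      linarith
  -- the difference estimate
  have hdelta : ∀ i : ℕ, 1 ≤ i → ‖b (i+1) - b i‖ ≤ (‖w‖/w.re) * (r i - r (i+1)) := by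
    intro i hi
    have hipos : (0:ℝ) < (i:ℝ) := by exact_mod_cast hi
    have hnm1 : -w - 1 ≠ -1 := by
      intro hc
      apply hw0
      have := congrArg (· + 1) hc
      simpa using this
    have hnotmem : (0:ℝ) ∉ Set.uIcc (i:ℝ) ((i:ℝ)+1) := by
      rw [Set.uIcc_of_le (by linarith)]
      rintro ⟨h1, h2⟩
      linarith
    have hint := integral_cpow (a := (i:ℝ)) (b := (i:ℝ)+1) (r := -w-1) (Or.inr ⟨hnm1, hnotmem⟩)
    have hsimp : -w - 1 + 1 = -w := by ring
    rw [hsimp] at hint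
    have hbi : b (i+1) - b i = (-w) * ∫ x : ℝ in (i:ℝ)..((i:ℝ)+1), (x:ℂ)^(-w-1) := by
      rw [hint]
      have hwne : -w ≠ 0 := neg_ne_zero.mpr hw0
      field_simp
      rw [hbdef]
      push_cast
      ring
    have hnormint : ‖∫ x : ℝ in (i:ℝ)..((i:ℝ)+1), (x:ℂ)^(-w-1)‖
        ≤ ∫ x : ℝ in (i:ℝ)..((i:ℝ)+1), ‖(x:ℂ)^(-w-1)‖ :=
      intervalIntegral.norm_integral_le_integral_norm (by linarith)
    have hnormval : ∫ x : ℝ in (i:ℝ)..((i:ℝ)+1), ‖(x:ℂ)^(-w-1)‖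
        = ∫ x : ℝ in (i:ℝ)..((i:ℝ)+1), x^(-w.re-1) := by
      refine intervalIntegral.integral_congr ?_
      intro x hx
      rw [Set.uIcc_of_le (by linarith)] at hx
      have hxpos : 0 < x := lt_of_lt_of_le hipos hx.1
      show ‖(x:ℂ)^(-w-1)‖ = x^(-w.re-1)
      rw [Complex.norm_cpow_eq_rpow_re_of_pos hxpos]
      congr 1
    have hrint := integral_rpow (a := (i:ℝ)) (b := (i:ℝ)+1) (r := -w.re-1)
      (Or.inr ⟨by intro hc; linarith [congrArg (· + 1) hc], hnotmem⟩)
    have hsimp2 : -w.re - 1 + 1 = -w.re := by ring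
    rw [hsimp2] at hrint
    calc ‖b (i+1) - b i‖ = ‖w‖ * ‖∫ x : ℝ in (i:ℝ)..((i:ℝ)+1), (x:ℂ)^(-w-1)‖ := by
          rw [hbi, norm_mul, norm_neg]
    _ ≤ ‖w‖ * ∫ x : ℝ in (i:ℝ)..((i:ℝ)+1), x^(-w.re-1) := by
          rw [← hnormval]
          exact mul_le_mul_of_nonneg_left hnormint (norm_nonneg w)
    _ = (‖w‖/w.re) * (r i - r (i+1)) := by
          have hwne : w.re ≠ 0 := ne_of_gt hwre
          have hfrac : (((i:ℝ)+1)^(-w.re) - ((i:ℝ))^(-w.re)) / (-w.re)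
              = (((i:ℝ))^(-w.re) - ((i:ℝ)+1)^(-w.re)) / w.re := by
            rw [div_neg]
            ring
          rw [hrint, hfrac]
          simp only [hrdef]
          push_cast
          ring
  -- sum of differences
  have hdeltasum : ∀ N : ℕ, ∑ i ∈ Finset.range N, ‖b (i+1) - b i‖ ≤ 1 + ‖w‖/w.re := by
    intro N
    rcases Nat.eq_zero_or_pos N with hN | hN
    · subst hN; simp; positivity
    · obtain ⟨N', rfl⟩ : ∃ N', N = N' + 1 := ⟨N - 1, by omega⟩
      rw [Finset.sum_range_succ']
      have hd0 : ‖b (0+1) - b 0‖ = 1 := by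
        rw [hb0]
        simp only [hbdef, zero_add, Nat.cast_one, Complex.one_cpow]
        simp
      have htel : ∑ i ∈ Finset.range N', ‖b (i+1+1) - b (i+1)‖
          ≤ (‖w‖/w.re) * (r 1 - r (N'+1)) := by
        have h1 : ∀ i ∈ Finset.range N', ‖b (i+1+1) - b (i+1)‖
            ≤ (‖w‖/w.re) * (r (i+1) - r (i+1+1)) :=
          fun i _ => hdelta (i+1) (by omega)
        refine (Finset.sum_le_sum h1).trans (le_of_eq ?_)
        rw [← Finset.mul_sum]
        congr 1
        have := Finset.sum_range_sub' (fun i => r (i+1)) N'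
        simpa using this
      have hrb : (‖w‖/w.re) * (r 1 - r (N'+1)) ≤ ‖w‖/w.re := by
        have := hrnn (N'+1)
        nlinarith [hr1]
      rw [hd0]
      linarith
  -- summation by parts
  rcases Nat.eq_zero_or_pos M with hM | hM
  · subst hM
    simp only [Finset.range_zero, Finset.sum_empty, norm_zero]
    positivity
  have key := Finset.sum_range_by_parts b Y M
  simp only [smul_eq_mul] at key
  have hcomm : ∑ n ∈ Finset.range M, Y n * b n = ∑ n ∈ Finset.range M, b n * Y n :=
    Finset.sum_congr rfl fun n _ => mul_comm _ _
  rw [hcomm, key]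
  have hterm1 : ‖b (M-1) * ∑ n ∈ Finset.range M, Y n‖ ≤ B := by
    rw [norm_mul]
    calc ‖b (M-1)‖ * ‖∑ n ∈ Finset.range M, Y n‖ ≤ 1 * B :=
      mul_le_mul (hbnorm _) (hB M) (norm_nonneg _) one_pos.le
    _ = B := one_mul B
  have hterm2 : ‖∑ i ∈ Finset.range (M-1), (b (i+1) - b i) * ∑ j ∈ Finset.range (i+1), Y j‖
      ≤ (1 + ‖w‖/w.re) * B := by
    refine (norm_sum_le _ _).trans ?_
    have h1 : ∀ i ∈ Finset.range (M-1), ‖(b (i+1) - b i) * ∑ j ∈ Finset.range (i+1), Y j‖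
        ≤ ‖b (i+1) - b i‖ * B := by
      intro i _
      rw [norm_mul]
      exact mul_le_mul_of_nonneg_left (hB (i+1)) (norm_nonneg _)
    refine (Finset.sum_le_sum h1).trans ?_
    rw [← Finset.sum_mul]
    exact mul_le_mul_of_nonneg_right (hdeltasum (M-1)) hB0
  have hwb : ‖w‖/w.re ≤ 1 + |w.im|/δ := by
    have h1 : ‖w‖ ≤ w.re + |w.im| := by
      have := Complex.norm_le_abs_re_add_abs_im w
      rw [abs_of_pos hwre] at this
      exact this
    have h2 : ‖w‖/w.re ≤ (w.re + |w.im|)/w.re := by gcongr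
    have h3 : (w.re + |w.im|)/w.re = 1 + |w.im|/w.re := by field_simp
    have h4 : |w.im|/w.re ≤ |w.im|/δ := by gcongr
    linarith
  calc ‖b (M-1) * ∑ n ∈ Finset.range M, Y n
        - ∑ i ∈ Finset.range (M-1), (b (i+1) - b i) * ∑ j ∈ Finset.range (i+1), Y j‖
      ≤ B + (1 + ‖w‖/w.re) * B := by
        refine (norm_sub_le _ _).trans ?_
        linarith
    _ ≤ B * (3 + |w.im| / δ) := by nlinarith [hwb]


lemma half_le_sigphi (φ : SClassTilde) : 1/2 ≤ φ.σφ := by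
  unfold SClassTilde.σφ
  refine le_csInf ⟨1, ?_⟩ ?_
  · exact Set.mem_union_right _ rfl
  rintro x (hx | hx)
  · exact hx.1
  · rw [Set.mem_singleton_iff] at hx
    subst hx
    norm_num

end RMPG

/-- **Polynomial growth of the random model.** For `σ₁ > σ_φ` and almost every `ω ∈ Ω`
there is `C(σ₁, ω) > 0` with `|φ(s, ω)| ≤ C(σ₁, ω)(|t| + 2)` for all `s = σ + it` with
`σ ≥ σ₁`. -/
theorem stmt10 (φ : SClassTilde) (σ₁ : ℝ) (h : φ.σφ < σ₁) :
    ∀ᵐ ω ∂haarOmega, ∃ C : ℝ, 0 < C ∧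
      ∀ s : ℂ, σ₁ ≤ s.re → ‖φ.randSeries ω s‖ ≤ C * (|s.im| + 2) := by
  classical
  have hhalf : 1/2 ≤ φ.σφ := RMPG.half_le_sigphi φ
  set σ₀ : ℝ := (φ.σφ + σ₁)/2 with hσ₀def
  have hσ₀half : 1/2 < σ₀ := by rw [hσ₀def]; linarith
  have hσ₀lt : σ₀ < σ₁ := by rw [hσ₀def]; linarith
  set δ : ℝ := σ₁ - σ₀ with hδdef
  have hδ : 0 < δ := by rw [hδdef]; linarith
  set η : ℝ := (σ₀ - 1/2)/2 with hηdef
  have hηpos : 0 < η := by rw [hηdef]; linarith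
  have hσ₀eq : σ₀ = 1/2 + 2*η := by rw [hηdef]; ring
  obtain ⟨C0, hC0pos, hC0⟩ := φ.hS1 η hηpos
  have hσ₀ne : (σ₀:ℂ) ≠ 0 := by
    rw [Complex.ofReal_ne_zero]
    linarith
  set γ : ℕ → ℂ := fun n => φ.a n * (n:ℂ)^(-(σ₀:ℂ)) with hγdef
  have hγ0 : γ 0 = 0 := by
    simp only [hγdef, Nat.cast_zero]
    rw [Complex.zero_cpow (neg_ne_zero.mpr hσ₀ne)]
    ring
  have hγbd : ∀ n : ℕ, 1 ≤ n → ‖γ n‖ ≤ C0 * (n:ℝ)^(-(1/2+η)) := by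
    intro n hn
    have hnpos : 0 < n := hn
    have hnR : (0:ℝ) < (n:ℝ) := by exact_mod_cast hnpos
    simp only [hγdef, norm_mul]
    have h1 : ‖(n:ℂ)^(-(σ₀:ℂ))‖ = (n:ℝ)^(-σ₀) := by
      rw [Complex.norm_natCast_cpow_of_pos hnpos]
      congr 1
    rw [h1]
    calc ‖φ.a n‖ * (n:ℝ)^(-σ₀) ≤ (C0 * (n:ℝ)^η) * (n:ℝ)^(-σ₀) :=
          mul_le_mul_of_nonneg_right (hC0 n hn) (Real.rpow_nonneg (le_of_lt hnR) _)
    _ = C0 * (n:ℝ)^(-(1/2+η)) := by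
          rw [mul_assoc, ← Real.rpow_add hnR, show η + -σ₀ = -(1/2+η) by linarith]
  have hA := RMPG.partA γ C0 η hηpos (le_of_lt hC0pos) hγ0 hγbd
  filter_upwards [hA] with ω hω
  obtain ⟨B, hB0, hB⟩ := hω
  refine ⟨(B+1) * (3 + 1/δ), by positivity, ?_⟩
  intro s hs
  have hsre : σ₁ ≤ s.re := hs
  set w : ℂ := s - (σ₀:ℂ) with hwdef
  have hwre : w.re = s.re - σ₀ := by simp [hwdef]
  have hwge : δ ≤ w.re := by rw [hwre, hδdef]; linarith
  have hwim : w.im = s.im := by simp [hwdef]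
  have hwne : w ≠ 0 := by
    intro hc
    have := congrArg Complex.re hc
    rw [hwre] at this
    simp at this
    linarith
  have hsne : s ≠ 0 := by
    intro hc
    have := congrArg Complex.re hc
    simp at this
    linarith
  have hterm : ∀ n : ℕ, φ.a n * SClassTilde.omegaMul ω n / (n:ℂ)^s
      = (γ n * SClassTilde.omegaMul ω n) * (n:ℂ)^(-w) := by
    intro n
    rcases Nat.eq_zero_or_pos n with hn | hn
    · subst hn
      simp [Complex.zero_cpow hsne, Complex.zero_cpow (neg_ne_zero.mpr hwne), hγ0]
    · have hnne : (n:ℂ) ≠ 0 := Nat.cast_ne_zero.mpr (by omega)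
      rw [div_eq_mul_inv, ← Complex.cpow_neg]
      have hsum : (n:ℂ)^(-(σ₀:ℂ)) * (n:ℂ)^(-w) = (n:ℂ)^(-s) := by
        rw [← Complex.cpow_add _ _ hnne]
        congr 1
        rw [hwdef]
        ring
      simp only [hγdef]
      rw [← hsum]
      ring
  have habel := RMPG.abel_bound (fun n => γ n * SClassTilde.omegaMul ω n) B hB w δ hδ hwge
  have hbound : ∀ M : ℕ, ‖∑ n ∈ Finset.range M, φ.a n * SClassTilde.omegaMul ω n / (n:ℂ)^s‖
      ≤ B * (3 + |s.im| / δ) := by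
    intro M
    rw [Finset.sum_congr rfl (fun n _ => hterm n), ← hwim]
    exact habel M
  have hfinal : B * (3 + |s.im| / δ) ≤ (B+1) * (3 + 1/δ) * (|s.im| + 2) := by
    have hT : (0:ℝ) ≤ |s.im| := abs_nonneg _
    have hd : (0:ℝ) < 1/δ := by positivity
    have hTd : |s.im| / δ = |s.im| * (1/δ) := by ring
    rw [hTd]
    nlinarith [mul_nonneg hB0 hT, mul_nonneg hB0 (le_of_lt hd), mul_nonneg hT (le_of_lt hd),
      mul_nonneg (mul_nonneg hB0 hT) (le_of_lt hd)]
  by_cases hsummable : Summable (fun n : ℕ => φ.a n * SClassTilde.omegaMul ω n / (n:ℂ)^s)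
  · have hten := hsummable.hasSum.tendsto_sum_nat
    have hnorm : Filter.Tendsto
        (fun M : ℕ => ‖∑ n ∈ Finset.range M, φ.a n * SClassTilde.omegaMul ω n / (n:ℂ)^s‖)
        Filter.atTop (nhds ‖φ.randSeries ω s‖) := hten.norm
    have hle := le_of_tendsto hnorm (Filter.Eventually.of_forall hbound)
    exact hle.trans hfinal
  · have : φ.randSeries ω s = 0 := tsum_eq_zero_of_not_summable hsummable
    rw [this, norm_zero]
    positivity

end
end

section
/- Let φ ∈ S̃, with Euler product local roots satisfying |α_{j,φ}(p)| ≤ 1, and for a prime p and z ∈ 𝕋 set log φ_p(s, z) = −Σ_{j=1}^{m_φ} Log(1 − α_{j,φ}(p)z·p^{−s}), where Log is the principal branch of the logarithm. Then for each fixed s with Re(s) > 1/2: (a) E^m[log φ_p(s, ω(p))] = 0 for every prime p; (b) Σ_p E^m[|log φ_p(s, ω(p))|²] < ∞; and consequently (c) the series log φ(s, ω) = Σ_p log φ_p(s, ω(p)) converges for almost every ω ∈ Ω. -/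
open Complex MeasureTheory Filter Topology

noncomputable section

namespace Stmt14Aux

open MeasureTheory SClassTilde
open scoped NNReal ENNReal

/-! ### Normalized Haar measures -/

instance : (haarCircle).IsHaarMeasure := by unfold haarCircle; infer_instance
instance : (haarOmega).IsHaarMeasure := by unfold haarOmega; infer_instance

lemma cT_ne_zero : haarCircle Set.univ ≠ 0 :=
  (isOpen_univ.measure_pos haarCircle ⟨1, trivial⟩).ne'
lemma cT_ne_top : haarCircle Set.univ ≠ ⊤ := (isCompact_univ.measure_lt_top).ne
lemma cOm_ne_zero : haarOmega Set.univ ≠ 0 :=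
  (isOpen_univ.measure_pos haarOmega ⟨1, trivial⟩).ne'
lemma cOm_ne_top : haarOmega Set.univ ≠ ⊤ := (isCompact_univ.measure_lt_top).ne

/-- The normalized (probability) Haar measure on the circle. -/
noncomputable def muT : Measure Circle := (haarCircle Set.univ)⁻¹ • haarCircle

/-- The normalized (probability) Haar measure on `Ω`. -/
noncomputable def muOm : Measure ProdCircle := (haarOmega Set.univ)⁻¹ • haarOmega

instance : IsProbabilityMeasure muT :=
  ⟨by rw [muT, Measure.smul_apply, smul_eq_mul]
      exact ENNReal.inv_mul_cancel cT_ne_zero cT_ne_top⟩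

instance : IsProbabilityMeasure muOm :=
  ⟨by rw [muOm, Measure.smul_apply, smul_eq_mul]
      exact ENNReal.inv_mul_cancel cOm_ne_zero cOm_ne_top⟩

instance : muT.IsHaarMeasure := by
  rw [muT]
  exact Measure.IsHaarMeasure.smul _ (ENNReal.inv_ne_zero.mpr cT_ne_top)
    (ENNReal.inv_ne_top.mpr cT_ne_zero)

instance : muOm.IsHaarMeasure := by
  rw [muOm]
  exact Measure.IsHaarMeasure.smul _ (ENNReal.inv_ne_zero.mpr cOm_ne_top)
    (ENNReal.inv_ne_top.mpr cOm_ne_zero)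

lemma haarOmega_eq_smul : haarOmega = haarOmega Set.univ • muOm := by
  rw [muOm, smul_smul, ENNReal.mul_inv_cancel cOm_ne_zero cOm_ne_top, one_smul]

/-! ### Integrability helpers -/

instance : IsFiniteMeasure haarOmega := ⟨isCompact_univ.measure_lt_top⟩

lemma cont_integrable {X E : Type*} [TopologicalSpace X] [CompactSpace X] [MeasurableSpace X]
    [OpensMeasurableSpace X] [NormedAddCommGroup E] {μ : Measure X} [IsFiniteMeasureOnCompacts μ]
    {g : X → E} (hg : Continuous g) : Integrable g μ :=
  hg.integrable_of_hasCompactSupport (HasCompactSupport.of_compactSpace g)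

/-! ### Measure preserving homomorphisms -/

lemma mp_of_hom {H : Type*} [Group H] [TopologicalSpace H] [IsTopologicalGroup H]
    [CompactSpace H] [MeasurableSpace H] [BorelSpace H]
    (f : ProdCircle →* H) (hc : Continuous f) (hs : Function.Surjective f)
    (ν : Measure H) [ν.IsHaarMeasure] [IsProbabilityMeasure ν] :
    MeasurePreserving f muOm ν :=
  f.measurePreserving hc hs (by simp)

lemma mp_eval (p : Nat.Primes) : MeasurePreserving (fun ω : ProdCircle => ω p) muOm muT :=
  mp_of_hom (Pi.evalMonoidHom _ p) (continuous_apply p) (fun z => ⟨fun _ => z, rfl⟩) muT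

/-- Restriction homomorphism along a family of primes. -/
def restrictHom {ι : Type*} (e : ι → Nat.Primes) : ProdCircle →* (ι → Circle) where
  toFun ω i := ω (e i)
  map_one' := rfl
  map_mul' _ _ := rfl

lemma mp_restrict {ι : Type*} [Fintype ι] (e : ι → Nat.Primes) (he : Function.Injective e) :
    MeasurePreserving (restrictHom e) muOm (Measure.pi fun _ => muT) :=
  mp_of_hom _ (continuous_pi fun i => continuous_apply (e i))
    (fun g => ⟨Function.extend e g 1, funext fun i => he.extend_apply g 1 i⟩) _

lemma nthPrime_injective : Function.Injective nthPrime := fun _ _ h =>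
  Nat.nth_injective Nat.infinite_setOf_prime (congrArg Subtype.val h)

lemma continuous_circle_coe : Continuous ((↑) : Circle → ℂ) := by exact continuous_induced_dom

lemma iIndep_coord : ProbabilityTheory.iIndepFun
    (fun i (ω : ProdCircle) => ω (nthPrime i)) muOm := by
  rw [ProbabilityTheory.iIndepFun_iff_measure_inter_preimage_eq_mul]
  intro S sets hsets
  have he : Function.Injective (fun i : {x // x ∈ S} => nthPrime (i : ℕ)) :=
    nthPrime_injective.comp Subtype.val_injective
  have hmp := mp_restrict _ he
  have hpre : (⋂ i ∈ S, (fun ω : ProdCircle => ω (nthPrime i)) ⁻¹' sets i)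
      = restrictHom (fun i : {x // x ∈ S} => nthPrime (i : ℕ)) ⁻¹'
        (Set.pi Set.univ fun i : {x // x ∈ S} => sets (i : ℕ)) := by
    ext ω
    simp only [Set.mem_iInter, Set.mem_preimage, Set.mem_pi, Set.mem_univ, forall_true_left,
      restrictHom, MonoidHom.coe_mk, OneHom.coe_mk, Subtype.forall]
  rw [hpre, hmp.measure_preimage
    ((MeasurableSet.univ_pi fun i : {x // x ∈ S} => hsets i.1 i.2).nullMeasurableSet),
    Measure.pi_pi,
    ← Finset.prod_coe_sort S fun i => muOm ((fun ω : ProdCircle => ω (nthPrime i)) ⁻¹' sets i)]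
  exact Finset.prod_congr rfl fun i _ =>
    ((mp_eval (nthPrime i)).measure_preimage ((hsets i i.2).nullMeasurableSet)).symm

/-! ### Circle integrals -/

lemma integral_circle_pow {k : ℕ} (hk : k ≠ 0) : ∫ z : Circle, (z : ℂ) ^ k ∂muT = 0 := by
  set c : Circle := Circle.exp (Real.pi / k) with hc_def
  have hc : (c : ℂ) ^ k = -1 := by
    rw [hc_def, Circle.coe_exp, ← Complex.exp_nat_mul]
    rw [show (k : ℂ) * (↑(Real.pi / k) * Complex.I) = ↑Real.pi * Complex.I by
      push_cast
      have : (k : ℂ) ≠ 0 := Nat.cast_ne_zero.mpr hk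
      field_simp]
    exact Complex.exp_pi_mul_I
  have h := integral_mul_left_eq_self (μ := muT) (fun z : Circle => (z : ℂ) ^ k) c
  simp only [Circle.coe_mul, mul_pow, hc] at h
  rw [integral_const_mul] at h
  have h2 : ∫ z : Circle, (z : ℂ) ^ k ∂muT + ∫ z : Circle, (z : ℂ) ^ k ∂muT = 0 := by
    linear_combination -h
  exact add_self_eq_zero.mp h2

lemma integral_circle_log {a : ℂ} (ha : ‖a‖ < 1) :
    ∫ z : Circle, Complex.log (1 - a * z) ∂muT = 0 := by
  have hnorm : ∀ z : Circle, ‖a * (z : ℂ)‖ = ‖a‖ := by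
    intro z
    rw [norm_mul, Circle.norm_coe, mul_one]
  have key : ∀ z : Circle, Complex.log (1 - a * z) = ∑' n : ℕ, -((a * z) ^ n / n) := by
    intro z
    have hz : ‖-(a * (z : ℂ))‖ < 1 := by rw [norm_neg, hnorm]; exact ha
    have h := Complex.hasSum_taylorSeries_log hz
    rw [show (1 : ℂ) + -(a * z) = 1 - a * z by ring] at h
    rw [← h.tsum_eq]
    refine tsum_congr fun n => ?_
    rw [show (-(a * (z : ℂ))) ^ n = (-1 : ℂ) ^ n * (a * z) ^ n from neg_pow _ _,
      ← mul_assoc, ← pow_add,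
      show (-1 : ℂ) ^ (n + 1 + n) = -1 from Odd.neg_one_pow ⟨n, by ring⟩]
    ring
  have hmeas : ∀ n : ℕ, AEStronglyMeasurable (fun z : Circle => -((a * z) ^ n / n)) muT := by
    intro n
    apply Continuous.aestronglyMeasurable
    exact (((continuous_const.mul continuous_circle_coe).pow n).div_const _).neg
  have hbound : ∀ (n : ℕ) (z : Circle), ‖-((a * (z : ℂ)) ^ n / n)‖ ≤ ‖a‖ ^ n := by
    intro n z
    rcases Nat.eq_zero_or_pos n with rfl | hn
    · simp
    · rw [norm_neg, norm_div, norm_pow, hnorm, Complex.norm_natCast]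
      exact div_le_self (pow_nonneg (norm_nonneg a) n) (by exact_mod_cast hn)
  calc ∫ z : Circle, Complex.log (1 - a * z) ∂muT
      = ∫ z : Circle, ∑' n : ℕ, -((a * z) ^ n / n) ∂muT :=
        integral_congr_ae (Filter.Eventually.of_forall key)
    _ = ∑' n : ℕ, ∫ z : Circle, -((a * z) ^ n / n) ∂muT := by
        refine integral_tsum hmeas ?_
        have hle : ∀ n : ℕ, ∫⁻ z : Circle, ‖-((a * (z : ℂ)) ^ n / n)‖₊ ∂muT
            ≤ ENNReal.ofReal (‖a‖ ^ n) := by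
          intro n
          calc ∫⁻ z : Circle, ‖-((a * (z : ℂ)) ^ n / n)‖₊ ∂muT
              ≤ ∫⁻ _ : Circle, ENNReal.ofReal (‖a‖ ^ n) ∂muT := by
                refine lintegral_mono fun z => ?_
                rw [← enorm_eq_nnnorm, ← ofReal_norm]
                exact ENNReal.ofReal_le_ofReal (hbound n z)
            _ = ENNReal.ofReal (‖a‖ ^ n) := by simp
        refine ne_top_of_le_ne_top ?_ (ENNReal.tsum_le_tsum hle)
        rw [← ENNReal.ofReal_tsum_of_nonneg (fun n => pow_nonneg (norm_nonneg a) n)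
          (summable_geometric_of_lt_one (norm_nonneg a) ha)]
        exact ENNReal.ofReal_ne_top
    _ = 0 := by
        have hz : (fun n : ℕ => ∫ z : Circle, -((a * z) ^ n / n) ∂muT) = fun _ => (0 : ℂ) := by
          funext n
          rcases Nat.eq_zero_or_pos n with rfl | hn
          · simp
          · have he : ∀ z : Circle, -((a * (z : ℂ)) ^ n / n) = -(a ^ n / n) * (z : ℂ) ^ n := by
              intro z; rw [mul_pow]; ring
            simp_rw [he]
            rw [integral_const_mul, integral_circle_pow hn.ne', mul_zero]
        rw [hz, tsum_zero]

/-! ### Bounds for the logarithmic factors -/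

lemma norm_circle (z : Circle) : ‖(z : ℂ)‖ = 1 := by
  rw [Circle.norm_coe]

lemma norm_log_one_sub_le' {w : ℂ} (hw : ‖w‖ ≤ 4 / 5) : ‖Complex.log (1 - w)‖ ≤ 3 * ‖w‖ := by
  have h0 : (0 : ℝ) ≤ ‖w‖ := norm_nonneg w
  have h1 : ‖-w‖ < 1 := by rw [norm_neg]; linarith
  have h := Complex.norm_log_one_add_le h1
  rw [← sub_eq_add_neg, norm_neg] at h
  have h4 : (1 - ‖w‖)⁻¹ ≤ 5 := by
    rw [show (5 : ℝ) = ((1 : ℝ)/5)⁻¹ by norm_num]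
    exact inv_anti₀ (by norm_num) (by linarith)
  have h5 : ‖w‖ ^ 2 * (1 - ‖w‖)⁻¹ / 2 ≤ 2 * ‖w‖ := by
    have h6 : ‖w‖ ^ 2 * (1 - ‖w‖)⁻¹ ≤ ‖w‖ ^ 2 * 5 :=
      mul_le_mul_of_nonneg_left h4 (sq_nonneg _)
    nlinarith
  linarith

section PhiS

variable (φ : SClassTilde) (s : ℂ)

lemma pbound (hs : 1 / 2 < s.re) (p : Nat.Primes) : ((p : ℕ) : ℝ) ^ (-s.re) ≤ 4 / 5 := by
  have h2 : ((p : ℕ) : ℝ) ^ (-s.re) ≤ (2 : ℝ) ^ (-s.re) :=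
    Real.rpow_le_rpow_of_nonpos two_pos (by exact_mod_cast p.2.two_le) (by linarith)
  have h3 : (2 : ℝ) ^ (-s.re) ≤ (2 : ℝ) ^ (-(1 / 2) : ℝ) :=
    Real.rpow_le_rpow_of_exponent_le one_le_two (by linarith)
  have h4 : (2 : ℝ) ^ (-(1 / 2) : ℝ) ≤ 4 / 5 := by
    rw [Real.rpow_neg (by norm_num)]
    have hsq : (5 / 4 : ℝ) ≤ Real.sqrt 2 := by
      rw [show (5 / 4 : ℝ) = Real.sqrt ((5 / 4) ^ 2) from (Real.sqrt_sq (by norm_num)).symm]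
      exact Real.sqrt_le_sqrt (by norm_num)
    calc ((2 : ℝ) ^ ((1 : ℝ) / 2))⁻¹ = (Real.sqrt 2)⁻¹ := by
          rw [Real.sqrt_eq_rpow]
      _ ≤ (5 / 4 : ℝ)⁻¹ := inv_anti₀ (by norm_num) hsq
      _ ≤ 4 / 5 := by norm_num
  linarith

lemma norm_alpha (hα : ∀ j p, ‖φ.α j p‖ ≤ 1) (j : Fin φ.m) (p : Nat.Primes) {z : ℂ}
    (hz : ‖z‖ ≤ 1) :
    ‖φ.α j p * z * ((p : ℕ) : ℂ) ^ (-s)‖ ≤ ((p : ℕ) : ℝ) ^ (-s.re) := by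
  have hq : ‖((p : ℕ) : ℂ) ^ (-s)‖ = ((p : ℕ) : ℝ) ^ (-s.re) := by
    rw [Complex.norm_natCast_cpow_of_pos p.2.pos, Complex.neg_re]
  rw [norm_mul, norm_mul, hq]
  have hrnn : (0 : ℝ) ≤ ((p : ℕ) : ℝ) ^ (-s.re) := Real.rpow_nonneg (Nat.cast_nonneg _) _
  calc ‖φ.α j p‖ * ‖z‖ * ((p : ℕ) : ℝ) ^ (-s.re)
      ≤ 1 * 1 * ((p : ℕ) : ℝ) ^ (-s.re) := by
        refine mul_le_mul (mul_le_mul (hα j p) hz (norm_nonneg z) zero_le_one) le_rfl hrnn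
          (by norm_num)
    _ = ((p : ℕ) : ℝ) ^ (-s.re) := by ring

lemma rpow_lt_one' (hs : 1 / 2 < s.re) (p : Nat.Primes) : ((p : ℕ) : ℝ) ^ (-s.re) < 1 :=
  Real.rpow_lt_one_of_one_lt_of_neg (by exact_mod_cast p.2.one_lt) (by linarith)

lemma slit (hα : ∀ j p, ‖φ.α j p‖ ≤ 1) (hs : 1 / 2 < s.re) (j : Fin φ.m) (p : Nat.Primes)
    {z : ℂ} (hz : ‖z‖ ≤ 1) :
    1 - φ.α j p * z * ((p : ℕ) : ℂ) ^ (-s) ∈ Complex.slitPlane := by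
  have hlt : ‖-(φ.α j p * z * ((p : ℕ) : ℂ) ^ (-s))‖ < 1 := by
    rw [norm_neg]
    exact lt_of_le_of_lt (norm_alpha φ s hα j p hz) (rpow_lt_one' s hs p)
  have := Complex.mem_slitPlane_of_norm_lt_one hlt
  rwa [← sub_eq_add_neg] at this

lemma norm_logFactor_le (hα : ∀ j p, ‖φ.α j p‖ ≤ 1) (hs : 1 / 2 < s.re) (p : Nat.Primes)
    {z : ℂ} (hz : ‖z‖ ≤ 1) :
    ‖logFactor φ p z s‖ ≤ 3 * φ.m * ((p : ℕ) : ℝ) ^ (-s.re) := by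
  have hrnn : (0 : ℝ) ≤ ((p : ℕ) : ℝ) ^ (-s.re) := Real.rpow_nonneg (Nat.cast_nonneg _) _
  show ‖-∑ j : Fin φ.m, Complex.log (1 - φ.α j p * z * ((p : ℕ) : ℂ) ^ (-s))‖ ≤ _
  rw [norm_neg]
  calc ‖∑ j : Fin φ.m, Complex.log (1 - φ.α j p * z * ((p : ℕ) : ℂ) ^ (-s))‖
      ≤ ∑ j : Fin φ.m, ‖Complex.log (1 - φ.α j p * z * ((p : ℕ) : ℂ) ^ (-s))‖ :=
        norm_sum_le _ _
    _ ≤ ∑ _j : Fin φ.m, 3 * (((p : ℕ) : ℝ) ^ (-s.re)) := by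
        refine Finset.sum_le_sum fun j _ => ?_
        refine le_trans (norm_log_one_sub_le'
          (le_trans (norm_alpha φ s hα j p hz) (pbound s hs p))) ?_
        exact mul_le_mul_of_nonneg_left (norm_alpha φ s hα j p hz) (by norm_num)
    _ = 3 * φ.m * ((p : ℕ) : ℝ) ^ (-s.re) := by
        rw [Finset.sum_const, Finset.card_univ, Fintype.card_fin, nsmul_eq_mul]; ring

lemma continuous_logterm (hα : ∀ j p, ‖φ.α j p‖ ≤ 1) (hs : 1 / 2 < s.re) (p : Nat.Primes)
    (j : Fin φ.m) :
    Continuous fun z : Circle =>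
      Complex.log (1 - φ.α j p * (z : ℂ) * ((p : ℕ) : ℂ) ^ (-s)) := by
  have hc : Continuous fun z : Circle => (1 - φ.α j p * (z : ℂ) * ((p : ℕ) : ℂ) ^ (-s)) :=
    continuous_const.sub ((continuous_const.mul continuous_circle_coe).mul continuous_const)
  refine continuous_iff_continuousAt.mpr fun z =>
    (continuousAt_clog ?_).comp hc.continuousAt
  exact slit φ s hα hs j p (norm_circle z).le

lemma continuous_logFactor (hα : ∀ j p, ‖φ.α j p‖ ≤ 1) (hs : 1 / 2 < s.re) (p : Nat.Primes) :
    Continuous fun z : Circle => logFactor φ p (z : ℂ) s := by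
  show Continuous fun z : Circle =>
    -∑ j : Fin φ.m, Complex.log (1 - φ.α j p * (z : ℂ) * ((p : ℕ) : ℂ) ^ (-s))
  exact (continuous_finset_sum _ fun j _ => continuous_logterm φ s hα hs p j).neg

/-! ### Expectation of the logarithmic factor -/

lemma integral_logFactor_muT (hα : ∀ j p, ‖φ.α j p‖ ≤ 1) (hs : 1 / 2 < s.re) (p : Nat.Primes) :
    ∫ z : Circle, logFactor φ p (z : ℂ) s ∂muT = 0 := by
  calc ∫ z : Circle, logFactor φ p (z : ℂ) s ∂muT
      = ∫ z : Circle,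
          -∑ j : Fin φ.m, Complex.log (1 - φ.α j p * (z : ℂ) * ((p : ℕ) : ℂ) ^ (-s)) ∂muT := rfl
    _ = -∑ j : Fin φ.m,
          ∫ z : Circle, Complex.log (1 - φ.α j p * (z : ℂ) * ((p : ℕ) : ℂ) ^ (-s)) ∂muT := by
        rw [integral_neg, integral_finset_sum _
          (fun j _ => cont_integrable (continuous_logterm φ s hα hs p j))]
    _ = 0 := by
        rw [neg_eq_zero]
        refine Finset.sum_eq_zero fun j _ => ?_
        have hre : (fun z : Circle =>
            Complex.log (1 - φ.α j p * (z : ℂ) * ((p : ℕ) : ℂ) ^ (-s)))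
            = fun z : Circle =>
              Complex.log (1 - (φ.α j p * ((p : ℕ) : ℂ) ^ (-s)) * (z : ℂ)) := by
          funext z; rw [mul_right_comm]
        rw [hre]
        refine integral_circle_log ?_
        have := norm_alpha φ s hα j p (z := 1) (by simp)
        rw [mul_one] at this
        exact lt_of_le_of_lt this (rpow_lt_one' s hs p)

lemma integral_logFactor_muOm (hα : ∀ j p, ‖φ.α j p‖ ≤ 1) (hs : 1 / 2 < s.re) (p : Nat.Primes) :
    ∫ ω : ProdCircle, logFactor φ p ((ω p : Circle) : ℂ) s ∂muOm = 0 := by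
  have h := (mp_eval p).map_eq
  have hgm : AEStronglyMeasurable (fun z : Circle => logFactor φ p (z : ℂ) s)
      (Measure.map (fun ω : ProdCircle => ω p) muOm) := by
    rw [h]; exact (continuous_logFactor φ s hα hs p).aestronglyMeasurable
  calc ∫ ω : ProdCircle, logFactor φ p ((ω p : Circle) : ℂ) s ∂muOm
      = ∫ z : Circle, logFactor φ p (z : ℂ) s
          ∂(Measure.map (fun ω : ProdCircle => ω p) muOm) :=
        (integral_map (mp_eval p).measurable.aemeasurable hgm).symm
    _ = ∫ z : Circle, logFactor φ p (z : ℂ) s ∂muT := by rw [h]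
    _ = 0 := integral_logFactor_muT φ s hα hs p

/-! ### Summability of the squared bounds -/

lemma summable_b (hs : 1 / 2 < s.re) :
    Summable fun p : Nat.Primes => (3 * (φ.m : ℝ) * ((p : ℕ) : ℝ) ^ (-s.re)) ^ 2 := by
  have h1 : ∀ p : Nat.Primes,
      9 * (φ.m : ℝ) ^ 2 * ((p : ℕ) : ℝ) ^ (-(2 * s.re))
      = (3 * (φ.m : ℝ) * ((p : ℕ) : ℝ) ^ (-s.re)) ^ 2 := by
    intro p
    have hp : (0 : ℝ) < ((p : ℕ) : ℝ) := by exact_mod_cast p.2.pos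
    have he : -s.re + -s.re = -(2 * s.re) := by ring
    rw [mul_pow, mul_pow, sq (((p : ℕ) : ℝ) ^ (-s.re)), ← Real.rpow_add hp, he]
    norm_num
  have h2 : Summable fun p : Nat.Primes => ((p : ℕ) : ℝ) ^ (-(2 * s.re)) :=
    Nat.Primes.summable_rpow.mpr (by linarith)
  exact (h2.mul_left (9 * (φ.m : ℝ) ^ 2)).congr h1

/-! ### The martingale argument -/

lemma ae_tendsto_L (hα : ∀ j p, ‖φ.α j p‖ ≤ 1) (hs : 1 / 2 < s.re)
    (L : ℂ →L[ℝ] ℝ) (hL : ∀ z : ℂ, ‖L z‖ ≤ ‖z‖) :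
    ∀ᵐ ω ∂muOm, ∃ c : ℝ, Filter.Tendsto
      (fun n : ℕ => ∑ i ∈ Finset.range (n + 1),
        L (logFactor φ (nthPrime i) ((ω (nthPrime i) : Circle) : ℂ) s))
      Filter.atTop (nhds c) := by
  classical
  set X : ℕ → ProdCircle → ℂ :=
    fun i ω => logFactor φ (nthPrime i) ((ω (nthPrime i) : Circle) : ℂ) s with hX
  set Y : ℕ → ProdCircle → ℝ :=
    fun i => (fun z : Circle => L (logFactor φ (nthPrime i) (z : ℂ) s)) ∘
      (fun ω : ProdCircle => ω (nthPrime i)) with hY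
  have hcont : ∀ i, Continuous (Y i) := fun i =>
    ((L.continuous).comp (continuous_logFactor φ s hα hs (nthPrime i))).comp (continuous_apply _)
  have hXcont : ∀ i, Continuous (X i) := fun i =>
    (continuous_logFactor φ s hα hs (nthPrime i)).comp (continuous_apply _)
  have hYsm : ∀ i, StronglyMeasurable (Y i) := fun i => (hcont i).stronglyMeasurable
  have hYint : ∀ i, Integrable (Y i) muOm := fun i => cont_integrable (hcont i)
  have hXint : ∀ i, Integrable (X i) muOm := fun i => cont_integrable (hXcont i)
  have hEX : ∀ i, ∫ ω, X i ω ∂muOm = 0 := fun i =>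
    integral_logFactor_muOm φ s hα hs (nthPrime i)
  have hEY : ∀ i, ∫ ω, Y i ω ∂muOm = 0 := by
    intro i
    have : ∫ ω, Y i ω ∂muOm = L (∫ ω, X i ω ∂muOm) := L.integral_comp_comm (hXint i)
    rw [this, hEX i, map_zero]
  have hind : ProbabilityTheory.iIndepFun
      Y muOm :=
    iIndep_coord.comp _ fun i =>
      (L.continuous.comp (continuous_logFactor φ s hα hs (nthPrime i))).measurable
  set F := MeasureTheory.Filtration.natural Y hYsm with hF
  set S : ℕ → ProdCircle → ℝ := fun n ω => ∑ i ∈ Finset.range (n + 1), Y i ω with hS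
  have hadp : MeasureTheory.StronglyAdapted F S := by
    intro n
    refine Finset.stronglyMeasurable_fun_sum _ fun i hi => ?_
    exact (Filtration.stronglyAdapted_natural hYsm i).mono
      (F.mono (Nat.lt_succ_iff.mp (Finset.mem_range.mp hi)))
  have hSint : ∀ n, Integrable (S n) muOm := fun n =>
    integrable_finset_sum _ fun i _ => hYint i
  have hmart : MeasureTheory.Martingale S F muOm := by
    refine martingale_nat hadp hSint fun n => ?_
    have h2 : muOm[Y (n + 1)|F n] =ᵐ[muOm] fun _ => ∫ ω, Y (n + 1) ω ∂muOm :=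
      ProbabilityTheory.iIndepFun.condExp_natural_ae_eq_of_lt hYsm hind (Nat.lt_succ_self n)
    have hgoal : muOm[S (n + 1)|F n] =ᵐ[muOm] S n := by
      have hsum : S (n + 1) = S n + Y (n + 1) :=
        funext fun ω => Finset.sum_range_succ _ _
      calc muOm[S (n + 1)|F n] = muOm[S n + Y (n + 1)|F n] := by rw [hsum]
        _ =ᵐ[muOm] muOm[S n|F n] + muOm[Y (n + 1)|F n] := condExp_add (hSint n) (hYint (n + 1)) _
        _ =ᵐ[muOm] S n + fun _ => ∫ ω, Y (n + 1) ω ∂muOm := by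
            rw [condExp_of_stronglyMeasurable (F.le n) (hadp n) (hSint n)]
            exact Filter.EventuallyEq.add (Filter.EventuallyEq.refl _ _) h2
        _ = S n := by rw [hEY (n + 1)]; funext ω; simp
    exact hgoal.symm
  -- uniform L² bound
  set b : ℕ → ℝ := fun i => 3 * (φ.m : ℝ) * ((nthPrime i : ℕ) : ℝ) ^ (-s.re) with hb
  have hXb : ∀ i ω, ‖X i ω‖ ≤ b i := fun i ω =>
    norm_logFactor_le φ s hα hs (nthPrime i) (norm_circle _).le
  have hYb : ∀ i ω, |Y i ω| ≤ b i := by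
    intro i ω
    have := hL (X i ω)
    rw [Real.norm_eq_abs] at this
    exact le_trans this (hXb i ω)
  set B : ℝ := ∑' p : Nat.Primes, (3 * (φ.m : ℝ) * ((p : ℕ) : ℝ) ^ (-s.re)) ^ 2 with hB
  have hBsum := summable_b φ s hs
  have hsumb : ∀ n : ℕ, ∑ i ∈ Finset.range n, (b i) ^ 2 ≤ B := by
    intro n
    have him : ∑ i ∈ Finset.range n, (b i) ^ 2
        = ∑ p ∈ (Finset.range n).image nthPrime,
            (3 * (φ.m : ℝ) * ((p : ℕ) : ℝ) ^ (-s.re)) ^ 2 := by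
      rw [Finset.sum_image (fun a _ c _ h => nthPrime_injective h)]
    rw [him]
    exact Summable.sum_le_tsum _ (fun p _ => sq_nonneg _) hBsum
  have hprod_int : ∀ i j, Integrable (fun ω => Y i ω * Y j ω) muOm := fun i j =>
    cont_integrable ((hcont i).mul (hcont j))
  have hoff : ∀ i j, i ≠ j → ∫ ω, Y i ω * Y j ω ∂muOm = 0 := by
    intro i j hij
    have h2 : ∫ ω, Y i ω * Y j ω ∂muOm = (∫ ω, Y i ω ∂muOm) * ∫ ω, Y j ω ∂muOm :=
      ProbabilityTheory.IndepFun.integral_fun_mul_eq_mul_integral (hind.indepFun hij) (hYint i).1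
        (hYint j).1
    rw [h2, hEY i, zero_mul]
  have hdiag : ∀ i, ∫ ω, Y i ω * Y i ω ∂muOm ≤ (b i) ^ 2 := by
    intro i
    calc ∫ ω, Y i ω * Y i ω ∂muOm ≤ ∫ _ω, (b i) ^ 2 ∂muOm := by
          refine integral_mono (hprod_int i i) (integrable_const _) fun ω => ?_
          calc Y i ω * Y i ω = |Y i ω| ^ 2 := by rw [_root_.sq_abs]; ring
            _ ≤ (b i) ^ 2 := pow_le_pow_left₀ (abs_nonneg _) (hYb i ω) 2
      _ = (b i) ^ 2 := by simp
  have hS2 : ∀ n, ∫ ω, (S n ω) ^ 2 ∂muOm ≤ B := by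
    intro n
    have hexp : ∀ ω : ProdCircle, (S n ω) ^ 2
        = ∑ i ∈ Finset.range (n + 1), ∑ j ∈ Finset.range (n + 1), Y i ω * Y j ω := by
      intro ω; rw [hS, sq, Finset.sum_mul_sum]
    calc ∫ ω, (S n ω) ^ 2 ∂muOm
        = ∑ i ∈ Finset.range (n + 1), ∑ j ∈ Finset.range (n + 1),
            ∫ ω, Y i ω * Y j ω ∂muOm := by
          simp_rw [hexp]
          rw [integral_finset_sum _ fun i _ =>
            integrable_finset_sum _ fun j _ => hprod_int i j]
          exact Finset.sum_congr rfl fun i _ =>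
            integral_finset_sum _ fun j _ => hprod_int i j
      _ = ∑ i ∈ Finset.range (n + 1), ∫ ω, Y i ω * Y i ω ∂muOm := by
          refine Finset.sum_congr rfl fun i hi => ?_
          exact Finset.sum_eq_single i (fun j _ hj => hoff i j fun h => hj h.symm)
            (fun h => absurd hi h)
      _ ≤ ∑ i ∈ Finset.range (n + 1), (b i) ^ 2 := Finset.sum_le_sum fun i _ => hdiag i
      _ ≤ B := hsumb (n + 1)
  have hScont : ∀ n, Continuous (S n) := fun n =>
    continuous_finset_sum _ fun i _ => hcont i
  have habs : ∀ n, ∫ ω, |S n ω| ∂muOm ≤ (1 + B) / 2 := by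
    intro n
    have hsq_int : Integrable (fun ω => (S n ω) ^ 2) muOm :=
      cont_integrable ((hScont n).pow 2)
    have hint2 : Integrable (fun ω => (1 + (S n ω) ^ 2) / 2) muOm :=
      ((integrable_const (1 : ℝ)).add hsq_int).div_const 2
    calc ∫ ω, |S n ω| ∂muOm ≤ ∫ ω, (1 + (S n ω) ^ 2) / 2 ∂muOm := by
          refine integral_mono (hSint n).abs hint2 fun ω => ?_
          nlinarith [sq_nonneg (|S n ω| - 1), _root_.sq_abs (S n ω), abs_nonneg (S n ω)]
      _ = (1 + ∫ ω, (S n ω) ^ 2 ∂muOm) / 2 := by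
          rw [integral_div, integral_add (integrable_const _) hsq_int, integral_const]
          simp
      _ ≤ (1 + B) / 2 := by linarith [hS2 n]
  have hL1 : ∀ n, eLpNorm (S n) 1 muOm ≤ ((((1 + B) / 2).toNNReal : ℝ≥0) : ℝ≥0∞) := by
    intro n
    rw [eLpNorm_one_eq_lintegral_enorm, ← ofReal_integral_norm_eq_lintegral_enorm (hSint n)]
    refine le_trans (ENNReal.ofReal_le_ofReal ?_) (le_of_eq rfl)
    simpa [Real.norm_eq_abs] using habs n
  have hconv := hmart.submartingale.exists_ae_tendsto_of_bdd hL1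
  filter_upwards [hconv] with ω hω
  exact hω

lemma ae_tendsto (hα : ∀ j p, ‖φ.α j p‖ ≤ 1) (hs : 1 / 2 < s.re) :
    ∀ᵐ ω ∂muOm, ∃ l : ℂ, Filter.Tendsto
      (fun M : ℕ => ∑ i ∈ Finset.range M,
        logFactor φ (nthPrime i) ((ω (nthPrime i) : Circle) : ℂ) s)
      Filter.atTop (nhds l) := by
  have hre := ae_tendsto_L φ s hα hs Complex.reCLM (fun z => by
    simpa [Real.norm_eq_abs] using Complex.abs_re_le_norm z)
  have him := ae_tendsto_L φ s hα hs Complex.imCLM (fun z => by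
    simpa [Real.norm_eq_abs] using Complex.abs_im_le_norm z)
  filter_upwards [hre, him] with ω hr hi
  obtain ⟨cr, hcr⟩ := hr
  obtain ⟨ci, hci⟩ := hi
  refine ⟨(cr : ℂ) + (ci : ℂ) * Complex.I, ?_⟩
  rw [← Filter.tendsto_add_atTop_iff_nat 1]
  have hid : ∀ n : ℕ,
      (∑ i ∈ Finset.range (n + 1), logFactor φ (nthPrime i) ((ω (nthPrime i) : Circle) : ℂ) s)
      = ((∑ i ∈ Finset.range (n + 1),
            Complex.reCLM (logFactor φ (nthPrime i) ((ω (nthPrime i) : Circle) : ℂ) s) : ℝ) : ℂ)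
        + ((∑ i ∈ Finset.range (n + 1),
            Complex.imCLM (logFactor φ (nthPrime i) ((ω (nthPrime i) : Circle) : ℂ) s) : ℝ) : ℂ)
          * Complex.I := by
    intro n
    rw [← map_sum Complex.reCLM _ _, ← map_sum Complex.imCLM _ _]
    exact (Complex.re_add_im _).symm
  have hlim : Filter.Tendsto (fun n : ℕ =>
      ((∑ i ∈ Finset.range (n + 1),
          Complex.reCLM (logFactor φ (nthPrime i) ((ω (nthPrime i) : Circle) : ℂ) s) : ℝ) : ℂ)
      + ((∑ i ∈ Finset.range (n + 1),
          Complex.imCLM (logFactor φ (nthPrime i) ((ω (nthPrime i) : Circle) : ℂ) s) : ℝ) : ℂ)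
        * Complex.I)
      Filter.atTop (nhds ((cr : ℂ) + (ci : ℂ) * Complex.I)) :=
    ((Complex.continuous_ofReal.tendsto cr).comp hcr).add
      (((Complex.continuous_ofReal.tendsto ci).comp hci).mul tendsto_const_nhds)
  exact hlim.congr fun n => (hid n).symm

end PhiS

end Stmt14Aux

/-- **Kolmogorov-type convergence of the random logarithm.** For `φ ∈ S̃` with
`|α_{j,φ}(p)| ≤ 1` and `Re s > 1/2`:
(a) `E^m[log φ_p(s, ω(p))] = 0` for every prime `p`;
(b) `∑_p E^m[|log φ_p(s, ω(p))|²] < ∞`;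
(c) the series `log φ(s, ω) = ∑_p log φ_p(s, ω(p))` converges for almost every `ω ∈ Ω`. -/
theorem stmt14 (φ : SClassTilde) (hα : ∀ j p, ‖φ.α j p‖ ≤ 1) (s : ℂ) (hs : 1 / 2 < s.re) :
    (∀ p : Nat.Primes,
      (∫ ω : ProdCircle, SClassTilde.logFactor φ p ((ω p : Circle) : ℂ) s ∂haarOmega) = 0) ∧
    (Summable fun p : Nat.Primes =>
      ∫ ω : ProdCircle, ‖SClassTilde.logFactor φ p ((ω p : Circle) : ℂ) s‖ ^ 2 ∂haarOmega) ∧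
    (∀ᵐ ω ∂haarOmega, ∃ l : ℂ,
      Filter.Tendsto (fun M : ℕ => ∑ i ∈ Finset.range M,
          SClassTilde.logFactor φ (nthPrime i) ((ω (nthPrime i) : Circle) : ℂ) s)
        Filter.atTop (nhds l)) := by
  refine ⟨fun p => ?_, ?_, ?_⟩
  · rw [Stmt14Aux.haarOmega_eq_smul, integral_smul_measure,
      Stmt14Aux.integral_logFactor_muOm φ s hα hs p, smul_zero]
  · have hsum := (Stmt14Aux.summable_b φ s hs).mul_left (haarOmega Set.univ).toReal
    refine Summable.of_nonneg_of_le (fun p => integral_nonneg fun ω => sq_nonneg _)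
      (fun p => ?_) hsum
    have hb : ∀ ω : ProdCircle,
        ‖SClassTilde.logFactor φ p ((ω p : Circle) : ℂ) s‖ ^ 2
          ≤ (3 * (φ.m : ℝ) * ((p : ℕ) : ℝ) ^ (-s.re)) ^ 2 := fun ω =>
      pow_le_pow_left₀ (norm_nonneg _)
        (Stmt14Aux.norm_logFactor_le φ s hα hs p (Stmt14Aux.norm_circle _).le) 2
    calc ∫ ω : ProdCircle, ‖SClassTilde.logFactor φ p ((ω p : Circle) : ℂ) s‖ ^ 2 ∂haarOmega
        ≤ ∫ _ω : ProdCircle, (3 * (φ.m : ℝ) * ((p : ℕ) : ℝ) ^ (-s.re)) ^ 2 ∂haarOmega :=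
          MeasureTheory.integral_mono_of_nonneg
            (Filter.Eventually.of_forall fun ω => sq_nonneg _)
            (MeasureTheory.integrable_const _) (Filter.Eventually.of_forall hb)
      _ = (haarOmega Set.univ).toReal * (3 * (φ.m : ℝ) * ((p : ℕ) : ℝ) ^ (-s.re)) ^ 2 := by
          rw [MeasureTheory.integral_const, smul_eq_mul]; rfl
  · rw [Stmt14Aux.haarOmega_eq_smul]
    exact MeasureTheory.Measure.ae_smul_measure (Stmt14Aux.ae_tendsto φ s hα hs) _

end
end
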